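/- arXiv:2006.01308 — 4 statements merged into one kernel-verified Lean document; each statement's English description precedes it below -/
import Mathlib

section
/- Let n ≥ 3, p = (n+2)/(n−2), let U be the standard bubble and Z_{n+1}(y) = ((n−2)/2) U(y) + y·∇U(y). Then the functions y ↦ U(y)^{p−1} Z_{n+1}(y) and y ↦ U(y)^{p−1} Z_{n+1}(y)² are integrable on ℝⁿ, and the constants c₁ := −p ∫_{ℝⁿ} U(y)^{p−1} Z_{n+1}(y) dy and c₂ := ∫_{ℝⁿ} U(y)^{p−1} Z_{n+1}(y)² dy are strictly positive (in particular ∫_{ℝⁿ} U^{p−1} Z_{n+1} dy < 0). -/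
open Real MeasureTheory
open scoped RealInnerProductSpace

section aux
open Filter Topology Set

private lemma aux_deriv (n : ℕ) (hn : 3 ≤ n) (r : ℝ) :
    HasDerivAt (fun r : ℝ => (r ^ n * (1/(n:ℝ) + ((2 - (n:ℝ))/((n:ℝ)*((n:ℝ)+2))) * r ^ 2)) * (1 + r ^ 2) ^ (-((n:ℝ)+2)/2))
      (r ^ (n-1) * (1 - r^2) * (1 + r^2) ^ (-((n:ℝ)+4)/2)) r := by
  set a : ℝ := 1/(n:ℝ)
  set b : ℝ := (2 - (n:ℝ))/((n:ℝ)*((n:ℝ)+2))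
  set c : ℝ := -((n:ℝ)+2)/2
  have ht : (0:ℝ) < 1 + r ^ 2 := by positivity
  have hG : HasDerivAt (fun r : ℝ => r ^ n * (a + b * r ^ 2))
      ((n:ℝ) * r ^ (n-1) * (a + b * r ^ 2) + r ^ n * (b * (2 * r))) r := by
    have h1 : HasDerivAt (fun r : ℝ => a + b * r ^ 2) (b * (2 * r)) r := by
      simpa using (((hasDerivAt_pow 2 r)).const_mul b).const_add a
    exact (hasDerivAt_pow n r).mul h1
  have hq : HasDerivAt (fun r : ℝ => 1 + r ^ 2) (2 * r) r := by
    simpa using (hasDerivAt_pow 2 r).const_add 1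
  have hH : HasDerivAt (fun r : ℝ => (1 + r ^ 2) ^ c)
      (2 * r * c * (1 + r ^ 2) ^ (c - 1)) r :=
    hq.rpow_const (Or.inl ht.ne')
  have : HasDerivAt (fun r : ℝ => r ^ n * (a + b * r ^ 2) * (1 + r ^ 2) ^ c)
      (((n:ℝ) * r ^ (n-1) * (a + b * r ^ 2) + r ^ n * (b * (2 * r))) * (1 + r ^ 2) ^ c
        + r ^ n * (a + b * r ^ 2) * (2 * r * c * (1 + r ^ 2) ^ (c - 1))) r := hG.mul hH
  convert this using 1
  have hsplit : (1 + r ^ 2) ^ c = (1 + r ^ 2) ^ (c - 1) * (1 + r ^ 2) := by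
    rw [← Real.rpow_add_one ht.ne']; ring_nf
  have hexp : -((n:ℝ)+4)/2 = c - 1 := by simp only [c]; ring
  obtain ⟨k, rfl⟩ : ∃ k, n = k + 3 := ⟨n - 3, by omega⟩
  rw [hexp, hsplit]
  have hn0 : ((k:ℝ) + 3) ≠ 0 := by positivity
  have hn2 : ((k:ℝ) + 3 + 2) ≠ 0 := by positivity
  simp only [a, b, c, Nat.add_sub_cancel]
  push_cast
  set X := (1 + r ^ 2) ^ (-(((k:ℝ) + 3)+2)/2 - 1) with hX
  have hpow : r ^ (k + 3) = r ^ (k + 2) * r := by ring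
  rw [hpow]
  field_simp
  ring

private lemma aux_tendsto (n : ℕ) (hn : 3 ≤ n) :
    Tendsto (fun r : ℝ => (r ^ n * (1/(n:ℝ) + ((2 - (n:ℝ))/((n:ℝ)*((n:ℝ)+2))) * r ^ 2)) * (1 + r ^ 2) ^ (-((n:ℝ)+2)/2))
      atTop (𝓝 ((2 - (n:ℝ))/((n:ℝ)*((n:ℝ)+2)))) := by
  set a : ℝ := 1/(n:ℝ)
  set b : ℝ := (2 - (n:ℝ))/((n:ℝ)*((n:ℝ)+2))
  have hu : Tendsto (fun r : ℝ => r ^ 2 / (1 + r ^ 2)) atTop (𝓝 1) := by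
    have h1 : Tendsto (fun r : ℝ => 1 + r ^ 2) atTop atTop :=
      tendsto_atTop_add_const_left _ 1 (tendsto_pow_atTop (by norm_num))
    have h2 : Tendsto (fun r : ℝ => (1 + r ^ 2)⁻¹) atTop (𝓝 0) :=
      tendsto_inv_atTop_zero.comp h1
    have : Tendsto (fun r : ℝ => 1 - (1 + r ^ 2)⁻¹) atTop (𝓝 (1 - 0)) :=
      tendsto_const_nhds.sub h2
    rw [sub_zero] at this
    refine this.congr' ?_
    filter_upwards [eventually_gt_atTop (0:ℝ)] with r hr
    have : (0:ℝ) < 1 + r ^ 2 := by positivity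
    field_simp
    ring
  have hinv : Tendsto (fun r : ℝ => (1 + r ^ 2)⁻¹) atTop (𝓝 0) :=
    tendsto_inv_atTop_zero.comp (tendsto_atTop_add_const_left _ 1 (tendsto_pow_atTop (by norm_num)))
  have hT : Tendsto (fun r : ℝ =>
      a * ((r ^ 2 / (1 + r ^ 2)) ^ ((n:ℝ)/2) * (1 + r ^ 2)⁻¹)
      + b * (r ^ 2 / (1 + r ^ 2)) ^ (((n:ℝ)+2)/2)) atTop (𝓝 (a * ((1:ℝ) ^ ((n:ℝ)/2) * 0) + b * (1:ℝ) ^ (((n:ℝ)+2)/2))) := by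
    exact (((hu.rpow_const (Or.inr (by positivity))).mul hinv).const_mul a).add
      ((hu.rpow_const (Or.inr (by positivity))).const_mul b)
  norm_num [Real.one_rpow] at hT
  refine hT.congr' ?_
  filter_upwards [eventually_gt_atTop (0:ℝ)] with r hr
  have ht : (0:ℝ) < 1 + r ^ 2 := by positivity
  have hr2 : (0:ℝ) ≤ r ^ 2 := by positivity
  have hdiv : ∀ e : ℝ, (r ^ 2 / (1 + r ^ 2)) ^ e = (r ^ 2) ^ e * (1 + r ^ 2) ^ (-e) := by
    intro e
    rw [Real.div_rpow hr2 ht.le, Real.rpow_neg ht.le, div_eq_mul_inv]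
  have hsq : ∀ e : ℝ, (r ^ 2) ^ e = r ^ (2 * e) := by
    intro e
    rw [← Real.rpow_natCast r 2, ← Real.rpow_mul hr.le]
    norm_num
  have hrn : r ^ (2 * ((n:ℝ)/2)) = r ^ n := by
    rw [show 2 * ((n:ℝ)/2) = (n:ℝ) by ring, Real.rpow_natCast]
  have hrn2 : r ^ (2 * (((n:ℝ)+2)/2)) = r ^ (n + 2) := by
    rw [show 2 * (((n:ℝ)+2)/2) = ((n + 2 : ℕ):ℝ) by push_cast; ring, Real.rpow_natCast]
  rw [hdiv, hdiv, hsq, hsq, hrn, hrn2]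
  have hmerge : (1 + r ^ 2) ^ (-((n:ℝ)/2)) * (1 + r ^ 2)⁻¹ = (1 + r ^ 2) ^ (-((n:ℝ)+2)/2) := by
    rw [← Real.rpow_neg_one (1 + r ^ 2), ← Real.rpow_add ht]
    ring_nf
  have hsplit : (1 + r ^ 2) ^ (-(((n:ℝ)+2)/2)) = (1 + r ^ 2) ^ (-((n:ℝ)+2)/2) := by
    ring_nf
  rw [mul_assoc, hmerge, hsplit]
  rw [pow_add]
  ring

private lemma aux_intOn (n : ℕ) (hn : 3 ≤ n) :
    IntegrableOn (fun r : ℝ => r ^ (n-1) * (1 - r^2) * (1 + r^2) ^ (-((n:ℝ)+4)/2)) (Ioi 0) := by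
  have hbase : Integrable (fun x : ℝ => (1 + ‖x‖^2) ^ (-(3:ℝ)/2)) := by
    have := integrable_rpow_neg_one_add_norm_sq (E := ℝ) (μ := volume) (r := 3)
      (by simp)
    simpa using this
  have hbase' : IntegrableOn (fun r : ℝ => (1 + r^2) ^ (-(3:ℝ)/2)) (Ioi 0) := by
    refine (hbase.congr ?_).integrableOn
    filter_upwards with x
    rw [Real.norm_eq_abs, sq_abs]
  refine hbase'.mono' ?_ ?_
  · apply Continuous.aestronglyMeasurable
    apply Continuous.mul
    · exact (continuous_pow _).mul (by continuity)
    · exact Continuous.rpow_const (by continuity) (fun x => Or.inl (by positivity))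
  · rw [ae_restrict_iff' measurableSet_Ioi]
    filter_upwards with r hr
    have hr0 : (0:ℝ) < r := hr
    have ht : (0:ℝ) < 1 + r^2 := by positivity
    rw [Real.norm_eq_abs, abs_mul, abs_mul]
    have h1 : |r ^ (n-1)| ≤ (1 + r^2) ^ (((n:ℝ)-1)/2) := by
      rw [abs_of_nonneg (by positivity)]
      have hrle : r ≤ (1 + r^2) ^ ((1:ℝ)/2) := by
        have : r = (r^2) ^ ((1:ℝ)/2) := by
          rw [← Real.rpow_natCast r 2, ← Real.rpow_mul hr0.le]; norm_num
        rw [this]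
        exact Real.rpow_le_rpow (by positivity) (by nlinarith) (by norm_num)
      calc r ^ (n-1) ≤ ((1 + r^2) ^ ((1:ℝ)/2)) ^ (n-1) :=
            pow_le_pow_left₀ hr0.le hrle _
        _ = (1 + r^2) ^ (((n:ℝ)-1)/2) := by
            rw [← Real.rpow_natCast ((1 + r^2) ^ ((1:ℝ)/2)) (n-1), ← Real.rpow_mul ht.le]
            congr 1
            have : ((n - 1 : ℕ) : ℝ) = (n:ℝ) - 1 := by
              have : (1:ℕ) ≤ n := by omega
              push_cast [Nat.cast_sub this]; ring
            rw [this]; ring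
    have h2 : |1 - r^2| ≤ 1 + r^2 := by
      rw [abs_le]; constructor <;> nlinarith
    have h3 : |(1 + r^2) ^ (-((n:ℝ)+4)/2)| = (1 + r^2) ^ (-((n:ℝ)+4)/2) :=
      abs_of_nonneg (Real.rpow_nonneg ht.le _)
    calc |r ^ (n-1)| * |1 - r^2| * |(1 + r^2) ^ (-((n:ℝ)+4)/2)|
        ≤ (1 + r^2) ^ (((n:ℝ)-1)/2) * (1 + r^2) * (1 + r^2) ^ (-((n:ℝ)+4)/2) := by
          rw [h3]
          exact mul_le_mul (mul_le_mul h1 h2 (abs_nonneg _) (Real.rpow_nonneg ht.le _))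
            le_rfl (Real.rpow_nonneg ht.le _) (by positivity)
      _ = (1 + r^2) ^ (((n:ℝ)-1)/2) * (1 + r^2) ^ (1:ℝ) * (1 + r^2) ^ (-((n:ℝ)+4)/2) := by
          rw [Real.rpow_one]
      _ = (1 + r^2) ^ (-(3:ℝ)/2) := by
          rw [← Real.rpow_add ht, ← Real.rpow_add ht]
          congr 1
          ring

private lemma aux_integral (n : ℕ) (hn : 3 ≤ n) :
    ∫ r in Ioi (0:ℝ), r ^ (n-1) * (1 - r^2) * (1 + r^2) ^ (-((n:ℝ)+4)/2)
      = (2 - (n:ℝ))/((n:ℝ)*((n:ℝ)+2)) := by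
  have h := integral_Ioi_of_hasDerivAt_of_tendsto'
    (fun x _ => aux_deriv n hn x) (aux_intOn n hn) (aux_tendsto n hn)
  rw [h]
  have hn0 : n ≠ 0 := by omega
  rw [zero_pow hn0]
  norm_num

private lemma aux_grad (n : ℕ) (αn : ℝ)
    (U : EuclideanSpace ℝ (Fin n) → ℝ)
    (hU : ∀ y, U y = αn * (1 + ‖y‖ ^ 2) ^ (-(((n:ℝ) - 2) / 2)))
    (y : EuclideanSpace ℝ (Fin n)) :
    ⟪y, gradient U y⟫
      = αn * ((-(((n:ℝ) - 2) / 2)) * (1 + ‖y‖ ^ 2) ^ (-(((n:ℝ) - 2) / 2) - 1)) * (2 * ‖y‖ ^ 2) := by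
  set c : ℝ := -(((n:ℝ) - 2) / 2) with hc
  have ht : (0:ℝ) < 1 + ‖y‖ ^ 2 := by positivity
  have hq : HasFDerivAt (fun y : EuclideanSpace ℝ (Fin n) => 1 + ‖y‖ ^ 2)
      (2 • (innerSL ℝ y)) y :=
    ((hasStrictFDerivAt_norm_sq y).hasFDerivAt).const_add 1
  have hr : HasDerivAt (fun t : ℝ => t ^ c) (c * (1 + ‖y‖ ^ 2) ^ (c - 1)) (1 + ‖y‖ ^ 2) :=
    Real.hasDerivAt_rpow_const (Or.inl ht.ne')
  have hcomp : HasFDerivAt (fun y : EuclideanSpace ℝ (Fin n) => (1 + ‖y‖ ^ 2) ^ c)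
      ((c * (1 + ‖y‖ ^ 2) ^ (c - 1)) • (2 • (innerSL ℝ y))) y :=
    by have := hr.comp_hasFDerivAt y hq; exact this
  have hcomp2 : HasFDerivAt U
      (αn • ((c * (1 + ‖y‖ ^ 2) ^ (c - 1)) • (2 • (innerSL ℝ y)))) y := by
    have h2 := hcomp.const_mul αn
    refine HasFDerivAt.congr_of_eventuallyEq h2 ?_
    filter_upwards with z
    rw [hU z]
  have hfd : fderiv ℝ U y = αn • ((c * (1 + ‖y‖ ^ 2) ^ (c - 1)) • (2 • (innerSL ℝ y))) :=
    hcomp2.fderiv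
  rw [real_inner_comm]
  rw [gradient, hfd, InnerProductSpace.toDual_symm_apply]
  simp only [ContinuousLinearMap.smul_apply, innerSL_apply_apply, smul_eq_mul, nsmul_eq_mul, Nat.cast_ofNat]
  rw [real_inner_self_eq_norm_sq]
  ring

end aux

set_option maxHeartbeats 1000000 in
/-- `U^{p-1} Z_{n+1}` and `U^{p-1} Z_{n+1}²` are integrable on `ℝⁿ`, and the
constants `c₁ = -p ∫ U^{p-1} Z_{n+1}` and `c₂ = ∫ U^{p-1} Z_{n+1}²` are strictly positive
(in particular `∫ U^{p-1} Z_{n+1} < 0`). -/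
theorem bubble_integral_constants_positive (n : ℕ) (hn : 3 ≤ n)
    (p : ℝ) (hp : p = (n + 2 : ℝ) / (n - 2))
    (αn : ℝ) (hα : αn = ((n : ℝ) * (n - 2)) ^ ((n - 2 : ℝ) / 4))
    (U : EuclideanSpace ℝ (Fin n) → ℝ)
    (hU : ∀ y, U y = αn * (1 / (1 + ‖y‖ ^ 2)) ^ ((n - 2 : ℝ) / 2))
    (Zn1 : EuclideanSpace ℝ (Fin n) → ℝ)
    (hZn1 : ∀ y, Zn1 y = ((n - 2 : ℝ) / 2) * U y + ⟪y, gradient U y⟫) :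
    Integrable (fun y => U y ^ (p - 1) * Zn1 y) ∧
    Integrable (fun y => U y ^ (p - 1) * (Zn1 y) ^ 2) ∧
    0 < -p * ∫ y, U y ^ (p - 1) * Zn1 y ∧
    0 < ∫ y, U y ^ (p - 1) * (Zn1 y) ^ 2 ∧
    (∫ y, U y ^ (p - 1) * Zn1 y) < 0 := by
  have hn3 : (3:ℝ) ≤ (n:ℝ) := by exact_mod_cast hn
  have hc2 : (0:ℝ) < (n:ℝ) - 2 := by linarith
  have hα0 : 0 < αn := by
    rw [hα]
    exact Real.rpow_pos_of_pos (by nlinarith) _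
  have hp0 : 0 < p := by rw [hp]; positivity
  have hU' : ∀ y, U y = αn * (1 + ‖y‖ ^ 2) ^ (-(((n:ℝ) - 2) / 2)) := by
    intro y
    have ht : (0:ℝ) < 1 + ‖y‖ ^ 2 := by positivity
    rw [hU y, one_div, Real.inv_rpow ht.le, ← Real.rpow_neg ht.le]
  set c : ℝ := ((n:ℝ) - 2) / 2 with hcdef
  have hc0 : 0 < c := by positivity
  -- Z_{n+1} in closed form
  have hZ : ∀ y, Zn1 y = αn * c * ((1 - ‖y‖^2) * (1 + ‖y‖^2) ^ (-c - 1)) := by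
    intro y
    have ht : (0:ℝ) < 1 + ‖y‖ ^ 2 := by positivity
    rw [hZn1 y, aux_grad n αn U hU' y, hU' y]
    have hsplit : (1 + ‖y‖^2) ^ (-c) = (1 + ‖y‖^2) ^ (-c - 1) * (1 + ‖y‖^2) := by
      rw [← Real.rpow_add_one ht.ne']; ring_nf
    rw [show -(((n:ℝ) - 2) / 2) = -c from rfl, hsplit]
    ring
  have hUpos : ∀ y, 0 < U y := by
    intro y
    rw [hU' y]
    have ht : (0:ℝ) < 1 + ‖y‖ ^ 2 := by positivity
    exact mul_pos hα0 (Real.rpow_pos_of_pos ht _)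
  have hp1 : p - 1 = 4 / ((n:ℝ) - 2) := by rw [hp]; field_simp; ring
  obtain ⟨A, hA, hApos⟩ : ∃ A : ℝ, A = αn ^ p * c ∧ 0 < A :=
    ⟨_, rfl, mul_pos (Real.rpow_pos_of_pos hα0 _) hc0⟩
  obtain ⟨B, hB, hBpos⟩ : ∃ B : ℝ, B = αn ^ (p + 1) * c ^ 2 ∧ 0 < B :=
    ⟨_, rfl, mul_pos (Real.rpow_pos_of_pos hα0 _) (by positivity)⟩
  -- pointwise identities
  have hUp : ∀ y, U y ^ (p - 1) = αn ^ (p - 1) * (1 + ‖y‖^2) ^ (-(2:ℝ)) := by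
    intro y
    have ht : (0:ℝ) < 1 + ‖y‖ ^ 2 := by positivity
    rw [hU' y, Real.mul_rpow hα0.le (Real.rpow_nonneg ht.le _),
      ← Real.rpow_mul ht.le]
    congr 2
    rw [hp1, hcdef]
    field_simp
    ring
  have key1 : (fun y : EuclideanSpace ℝ (Fin n) => U y ^ (p - 1) * Zn1 y)
      = fun y => A * ((1 - ‖y‖^2) * (1 + ‖y‖^2) ^ (-((n:ℝ)+4)/2)) := by
    funext y
    have ht : (0:ℝ) < 1 + ‖y‖ ^ 2 := by positivity
    rw [hUp y, hZ y]
    have hαp : αn ^ (p - 1) * αn = αn ^ p := by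
      have := Real.rpow_add_one hα0.ne' (p - 1)
      rw [sub_add_cancel] at this
      rw [← this]
    have hexp : (1 + ‖y‖^2) ^ (-(2:ℝ)) * (1 + ‖y‖^2) ^ (-c - 1)
        = (1 + ‖y‖^2) ^ (-((n:ℝ)+4)/2) := by
      rw [← Real.rpow_add ht]
      congr 1
      rw [hcdef]; ring
    calc αn ^ (p - 1) * (1 + ‖y‖^2) ^ (-(2:ℝ)) * (αn * c * ((1 - ‖y‖^2) * (1 + ‖y‖^2) ^ (-c - 1)))
        = (αn ^ (p - 1) * αn) * c * ((1 - ‖y‖^2) * ((1 + ‖y‖^2) ^ (-(2:ℝ)) * (1 + ‖y‖^2) ^ (-c - 1))) := by ring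
      _ = A * ((1 - ‖y‖^2) * (1 + ‖y‖^2) ^ (-((n:ℝ)+4)/2)) := by
          rw [hαp, hexp, hA]
  have key2 : (fun y : EuclideanSpace ℝ (Fin n) => U y ^ (p - 1) * (Zn1 y) ^ 2)
      = fun y => B * ((1 - ‖y‖^2) ^ 2 * (1 + ‖y‖^2) ^ (-((n:ℝ)+2))) := by
    funext y
    have ht : (0:ℝ) < 1 + ‖y‖ ^ 2 := by positivity
    rw [hUp y, hZ y]
    have hαp : αn ^ (p - 1) * αn ^ 2 = αn ^ (p + 1) := by
      rw [← Real.rpow_natCast αn 2, ← Real.rpow_add hα0]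
      congr 1
      push_cast; ring
    have hsq : ((1 + ‖y‖^2) ^ (-c - 1)) ^ 2 = (1 + ‖y‖^2) ^ ((-c - 1) * 2) := by
      rw [← Real.rpow_natCast ((1 + ‖y‖^2) ^ (-c - 1)) 2, ← Real.rpow_mul ht.le]
      norm_num
    have hexp : (1 + ‖y‖^2) ^ (-(2:ℝ)) * (1 + ‖y‖^2) ^ ((-c - 1) * 2)
        = (1 + ‖y‖^2) ^ (-((n:ℝ)+2)) := by
      rw [← Real.rpow_add ht]
      congr 1
      rw [hcdef]; ring
    calc αn ^ (p - 1) * (1 + ‖y‖^2) ^ (-(2:ℝ)) * (αn * c * ((1 - ‖y‖^2) * (1 + ‖y‖^2) ^ (-c - 1))) ^ 2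
        = (αn ^ (p - 1) * αn ^ 2) * c ^ 2 * ((1 - ‖y‖^2) ^ 2 * ((1 + ‖y‖^2) ^ (-(2:ℝ)) * ((1 + ‖y‖^2) ^ (-c - 1)) ^ 2)) := by ring
      _ = B * ((1 - ‖y‖^2) ^ 2 * (1 + ‖y‖^2) ^ (-((n:ℝ)+2))) := by
          rw [hαp, hsq, hexp, ← hB]
  rw [key1, key2]
  have hfinrank : Module.finrank ℝ (EuclideanSpace ℝ (Fin n)) = n := finrank_euclideanSpace_fin
  haveI : Nontrivial (EuclideanSpace ℝ (Fin n)) :=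
    Module.nontrivial_of_finrank_pos (R := ℝ) (by rw [hfinrank]; omega)
  have hcontE : ∀ e : ℝ, Continuous fun y : EuclideanSpace ℝ (Fin n) => (1 + ‖y‖^2 : ℝ) ^ e :=
    fun e => Continuous.rpow_const (by continuity) (fun y => Or.inl (by positivity))
  -- integrability of the first function
  have hint1 : Integrable
      (fun y : EuclideanSpace ℝ (Fin n) => A * ((1 - ‖y‖^2) * (1 + ‖y‖^2) ^ (-((n:ℝ)+4)/2))) := by
    have hbase : Integrable
        (fun x : EuclideanSpace ℝ (Fin n) => (1 + ‖x‖^2) ^ (-((n:ℝ)+2)/2)) := by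
      apply integrable_rpow_neg_one_add_norm_sq (μ := volume) (r := (n:ℝ)+2)
      rw [hfinrank]; linarith
    refine (hbase.const_mul |A|).mono' ?_ ?_
    · exact (continuous_const.mul
        ((continuous_const.sub ((continuous_norm).pow 2)).mul (hcontE _))).aestronglyMeasurable
    · filter_upwards with y
      have ht : (0:ℝ) < 1 + ‖y‖ ^ 2 := by positivity
      rw [Real.norm_eq_abs, abs_mul, abs_mul]
      have h2 : |1 - ‖y‖^2| ≤ 1 + ‖y‖^2 := by
        rw [abs_le]; constructor <;> nlinarith [sq_nonneg ‖y‖]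
      have h3 : |(1 + ‖y‖^2) ^ (-((n:ℝ)+4)/2)| = (1 + ‖y‖^2) ^ (-((n:ℝ)+4)/2) :=
        abs_of_nonneg (Real.rpow_nonneg ht.le _)
      rw [h3]
      refine mul_le_mul le_rfl ?_ (by positivity) (abs_nonneg _)
      calc |1 - ‖y‖^2| * (1 + ‖y‖^2) ^ (-((n:ℝ)+4)/2)
          ≤ (1 + ‖y‖^2) ^ (1:ℝ) * (1 + ‖y‖^2) ^ (-((n:ℝ)+4)/2) := by
            rw [Real.rpow_one]
            exact mul_le_mul_of_nonneg_right h2 (Real.rpow_nonneg ht.le _)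
        _ = (1 + ‖y‖^2) ^ (-((n:ℝ)+2)/2) := by
            rw [← Real.rpow_add ht]; congr 1; ring
  -- integrability of the second function
  have hint2 : Integrable
      (fun y : EuclideanSpace ℝ (Fin n) => B * ((1 - ‖y‖^2) ^ 2 * (1 + ‖y‖^2) ^ (-((n:ℝ)+2)))) := by
    have hbase : Integrable
        (fun x : EuclideanSpace ℝ (Fin n) => (1 + ‖x‖^2) ^ (-(n:ℝ))) := by
      have h := integrable_rpow_neg_one_add_norm_sq
        (E := EuclideanSpace ℝ (Fin n)) (μ := volume) (r := 2*(n:ℝ))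
        (by rw [hfinrank]; push_cast; linarith)
      refine h.congr (Filter.Eventually.of_forall fun x => ?_)
      congr 1; ring
    refine (hbase.const_mul |B|).mono' ?_ ?_
    · exact (continuous_const.mul
        (((continuous_const.sub ((continuous_norm).pow 2)).pow 2).mul (hcontE _))).aestronglyMeasurable
    · filter_upwards with y
      have ht : (0:ℝ) < 1 + ‖y‖ ^ 2 := by positivity
      rw [Real.norm_eq_abs, abs_mul, abs_mul]
      have h2 : |(1 - ‖y‖^2) ^ 2| ≤ (1 + ‖y‖^2) ^ 2 := by
        rw [abs_of_nonneg (sq_nonneg _)]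
        have : |1 - ‖y‖^2| ≤ 1 + ‖y‖^2 := by
          rw [abs_le]; constructor <;> nlinarith [sq_nonneg ‖y‖]
        nlinarith [abs_nonneg (1 - ‖y‖^2), sq_abs (1 - ‖y‖^2)]
      have h3 : |(1 + ‖y‖^2) ^ (-((n:ℝ)+2))| = (1 + ‖y‖^2) ^ (-((n:ℝ)+2)) :=
        abs_of_nonneg (Real.rpow_nonneg ht.le _)
      rw [h3]
      refine mul_le_mul le_rfl ?_ (by positivity) (abs_nonneg _)
      calc |(1 - ‖y‖^2) ^ 2| * (1 + ‖y‖^2) ^ (-((n:ℝ)+2))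
          ≤ (1 + ‖y‖^2) ^ ((2:ℕ):ℝ) * (1 + ‖y‖^2) ^ (-((n:ℝ)+2)) := by
            rw [Real.rpow_natCast]
            exact mul_le_mul_of_nonneg_right h2 (Real.rpow_nonneg ht.le _)
        _ = (1 + ‖y‖^2) ^ (-(n:ℝ)) := by
            rw [← Real.rpow_add ht]; congr 1; push_cast; ring
  -- value of the first integral
  have hval1 : (∫ y : EuclideanSpace ℝ (Fin n),
        A * ((1 - ‖y‖^2) * (1 + ‖y‖^2) ^ (-((n:ℝ)+4)/2)))
      = (n : ℝ) * (volume (Metric.ball (0 : EuclideanSpace ℝ (Fin n)) 1)).toReal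
        * (A * ((2 - (n:ℝ))/((n:ℝ)*((n:ℝ)+2)))) := by
    have h := integral_fun_norm_addHaar (volume : Measure (EuclideanSpace ℝ (Fin n)))
      (fun r : ℝ => A * ((1 - r^2) * (1 + r^2) ^ (-((n:ℝ)+4)/2)))
    rw [hfinrank] at h
    rw [h, nsmul_eq_mul, smul_eq_mul]
    have heq : (fun r : ℝ => r ^ (n-1) • (A * ((1 - r^2) * (1 + r^2) ^ (-((n:ℝ)+4)/2))))
        = fun r : ℝ => A * (r ^ (n-1) * (1 - r^2) * (1 + r^2) ^ (-((n:ℝ)+4)/2)) := by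
      funext r; rw [smul_eq_mul]; ring
    rw [heq, integral_const_mul, aux_integral n hn, measureReal_def]
    ring
  have hvolpos : 0 < (volume (Metric.ball (0 : EuclideanSpace ℝ (Fin n)) 1)).toReal :=
    ENNReal.toReal_pos (Metric.measure_ball_pos volume 0 one_pos).ne' measure_ball_lt_top.ne
  have hbneg : (2 - (n:ℝ))/((n:ℝ)*((n:ℝ)+2)) < 0 :=
    div_neg_of_neg_of_pos (by linarith) (by positivity)
  have hI1neg : (∫ y : EuclideanSpace ℝ (Fin n),
      A * ((1 - ‖y‖^2) * (1 + ‖y‖^2) ^ (-((n:ℝ)+4)/2))) < 0 := by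
    rw [hval1]
    apply mul_neg_of_pos_of_neg (by positivity)
    exact mul_neg_of_pos_of_neg hApos hbneg
  -- positivity of second integral
  have hnn : ∀ y : EuclideanSpace ℝ (Fin n),
      0 ≤ B * ((1 - ‖y‖^2) ^ 2 * (1 + ‖y‖^2) ^ (-((n:ℝ)+2))) := by
    intro y
    have ht : (0:ℝ) < 1 + ‖y‖ ^ 2 := by positivity
    have := Real.rpow_nonneg ht.le (-((n:ℝ)+2))
    positivity
  have hI2pos : 0 < ∫ y : EuclideanSpace ℝ (Fin n),
      B * ((1 - ‖y‖^2) ^ 2 * (1 + ‖y‖^2) ^ (-((n:ℝ)+2))) := by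
    rw [integral_pos_iff_support_of_nonneg hnn hint2]
    refine lt_of_lt_of_le (Metric.measure_ball_pos volume (0 : EuclideanSpace ℝ (Fin n)) one_pos) ?_
    apply measure_mono
    intro y hy
    have hy1 : ‖y‖ < 1 := by simpa using hy
    have ht : (0:ℝ) < 1 + ‖y‖ ^ 2 := by positivity
    have h1 : (1 - ‖y‖^2) ≠ 0 := by nlinarith [norm_nonneg y]
    have h2 : (1 + ‖y‖^2) ^ (-((n:ℝ)+2)) ≠ 0 := (Real.rpow_pos_of_pos ht _).ne'
    simp only [Function.mem_support]
    positivity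
  refine ⟨hint1, hint2, ?_, hI2pos, hI1neg⟩
  exact mul_pos_of_neg_of_neg (by linarith) hI1neg
end

section
/- Let k ≥ 1, let A be a symmetric positive definite real k×k matrix, and let c > 0. Then there exists exactly one vector Λ ∈ ℝᵏ with Λ_j > 0 for all j = 1,…,k such that Λ_j · (AΛ)_j = c for every j = 1,…,k (where (AΛ)_j denotes the j-th component of the matrix-vector product). In particular, the balancing system b_j^{n−3} H(q_j,q_j) − Σ_{i≠j} b_j^{(n−2)/2−1} b_i^{(n−2)/2} G(q_j,q_i) = (2/(n−2))·(1/b_j) for the positive scaling constants b_j has a unique positive solution whenever the matrix 𝒢(q) (diagonal H(q_j,q_j), off-diagonal −G(q_i,q_j)) is positive definite, via Λ_j = b_j^{(n−2)/2}, A = 𝒢(q), c = 2/(n−2). -/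
open Matrix

section Aux

variable {k : ℕ}

private theorem bal_symm_dot (A : Matrix (Fin k) (Fin k) ℝ) (hA : A.PosDef)
    (x y : Fin k → ℝ) : x ⬝ᵥ A.mulVec y = y ⬝ᵥ A.mulVec x := by
  rw [dotProduct_mulVec, dotProduct_comm, ← mulVec_transpose,
    ← conjTranspose_eq_transpose_of_trivial, hA.1]

private theorem bal_single_dot (v : Fin k → ℝ) (j : Fin k) :
    Pi.single j (1:ℝ) ⬝ᵥ v = v j := by
  simp [dotProduct, Pi.single_apply]

private theorem bal_quad_cont (A : Matrix (Fin k) (Fin k) ℝ) :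
    Continuous fun x : Fin k → ℝ => x ⬝ᵥ A.mulVec x := by
  simp only [dotProduct, mulVec]
  fun_prop

private theorem bal_quad_smul (A : Matrix (Fin k) (Fin k) ℝ) (s : ℝ) (y : Fin k → ℝ) :
    (s • y) ⬝ᵥ A.mulVec (s • y) = s^2 * (y ⬝ᵥ A.mulVec y) := by
  rw [mulVec_smul, smul_dotProduct, dotProduct_smul, smul_eq_mul, smul_eq_mul]; ring

private theorem bal_coercive (hk : 1 ≤ k) (A : Matrix (Fin k) (Fin k) ℝ) (hA : A.PosDef) :
    ∃ α > 0, ∀ x : Fin k → ℝ, α * ‖x‖^2 ≤ x ⬝ᵥ A.mulVec x := by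
  haveI : Nonempty (Fin k) := ⟨⟨0, hk⟩⟩
  have hsph : (Metric.sphere (0 : Fin k → ℝ) 1).Nonempty :=
    NormedSpace.sphere_nonempty.mpr zero_le_one
  obtain ⟨x₀, hx₀, hmin⟩ := (isCompact_sphere (0 : Fin k → ℝ) 1).exists_isMinOn hsph
    (bal_quad_cont A).continuousOn
  have hx₀n : ‖x₀‖ = 1 := by simpa using hx₀
  have hx₀0 : x₀ ≠ 0 := by intro h; rw [h] at hx₀n; simp at hx₀n
  refine ⟨x₀ ⬝ᵥ A.mulVec x₀, by simpa using hA.dotProduct_mulVec_pos hx₀0, fun x => ?_⟩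
  rcases eq_or_ne x 0 with rfl | hx
  · simp
  · have hn : (0:ℝ) < ‖x‖ := norm_pos_iff.mpr hx
    have hyn : (‖x‖⁻¹ • x) ∈ Metric.sphere (0 : Fin k → ℝ) 1 := by
      simp [norm_smul, abs_of_pos (inv_pos.mpr hn), inv_mul_cancel₀ hn.ne']
    have hmy : x₀ ⬝ᵥ A.mulVec x₀ ≤ (‖x‖⁻¹ • x) ⬝ᵥ A.mulVec (‖x‖⁻¹ • x) := hmin hyn
    rw [bal_quad_smul] at hmy
    have h2 : (0:ℝ) < ‖x‖^2 := by positivity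
    have hinv : ‖x‖⁻¹^2 * (x ⬝ᵥ A.mulVec x) * ‖x‖^2 = x ⬝ᵥ A.mulVec x := by
      field_simp
    linarith [mul_le_mul_of_nonneg_right hmy h2.le, hinv]

private theorem bal_uniq (A : Matrix (Fin k) (Fin k) ℝ) (hA : A.PosDef) (c : ℝ) (hc : 0 < c)
    (Λ M : Fin k → ℝ) (hΛ : ∀ j, 0 < Λ j) (hM : ∀ j, 0 < M j)
    (h1 : ∀ j, Λ j * A.mulVec Λ j = c) (h2 : ∀ j, M j * A.mulVec M j = c) : Λ = M := by
  by_contra hne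
  have hu : Λ - M ≠ 0 := sub_ne_zero.mpr hne
  have hpos : 0 < (Λ - M) ⬝ᵥ A.mulVec (Λ - M) := by simpa using hA.dotProduct_mulVec_pos hu
  have hle : (Λ - M) ⬝ᵥ A.mulVec (Λ - M) ≤ 0 := by
    rw [mulVec_sub, dotProduct_sub]
    have key : ∀ j, (Λ - M) j * A.mulVec Λ j - (Λ - M) j * A.mulVec M j ≤ 0 := by
      intro j
      have hΛj := hΛ j; have hMj := hM j
      have ha : A.mulVec Λ j = c / Λ j := by
        rw [eq_div_iff hΛj.ne']; linarith [h1 j]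
      have hb : A.mulVec M j = c / M j := by
        rw [eq_div_iff hMj.ne']; linarith [h2 j]
      have hsub : (Λ - M) j = Λ j - M j := rfl
      rw [hsub, ha, hb]
      have heq : (Λ j - M j) * (c / Λ j) - (Λ j - M j) * (c / M j)
          = -(c * (Λ j - M j)^2) / (Λ j * M j) := by
        field_simp; ring
      rw [heq]
      apply div_nonpos_of_nonpos_of_nonneg
      · simp [mul_nonneg hc.le (sq_nonneg _)]
      · exact (mul_pos hΛj hMj).le
    calc (Λ - M) ⬝ᵥ A.mulVec Λ - (Λ - M) ⬝ᵥ A.mulVec M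
        = ∑ j, ((Λ - M) j * A.mulVec Λ j - (Λ - M) j * A.mulVec M j) := by
          rw [Finset.sum_sub_distrib]; rfl
      _ ≤ 0 := Finset.sum_nonpos fun j _ => key j
  linarith

end Aux

/-- for a symmetric positive definite real `k×k` matrix `A` and `c > 0`, there
is exactly one vector `Λ` with all entries positive such that `Λ_j (AΛ)_j = c` for every `j`.
(This is the balancing system for the scaling constants `b_j`, via `Λ_j = b_j^{(n-2)/2}`,
`A = 𝒢(q)`, `c = 2/(n-2)`.) -/
theorem unique_positive_solution_of_balancing_system (k : ℕ) (hk : 1 ≤ k)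
    (A : Matrix (Fin k) (Fin k) ℝ) (hA : A.PosDef) (c : ℝ) (hc : 0 < c) :
    ∃! Λ : Fin k → ℝ, (∀ j, 0 < Λ j) ∧ ∀ j, Λ j * A.mulVec Λ j = c := by
  obtain ⟨α, hα, hcoer⟩ := bal_coercive hk A hA
  -- the functional to minimize
  set f : (Fin k → ℝ) → ℝ :=
    fun Λ => Λ ⬝ᵥ A.mulVec Λ - 2*c*∑ i, Real.log (Λ i) with hf
  set w : Fin k → ℝ := fun _ => 1 with hw
  have hw0 : w ≠ 0 := by
    intro h
    have := congrFun h ⟨0, hk⟩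
    simp [hw] at this
  set F₀ : ℝ := w ⬝ᵥ A.mulVec w with hF₀
  have hF₀pos : 0 < F₀ := by simpa [hF₀] using hA.dotProduct_mulVec_pos hw0
  have hfw : f w = F₀ := by simp [hf, hw, hF₀]
  -- choose R
  set R : ℝ := max 2 ((2*c*k + |F₀| + 1)/α) with hR
  have hR2 : (2:ℝ) ≤ R := le_max_left _ _
  have hR1 : (1:ℝ) ≤ R := by linarith
  have hRpos : (0:ℝ) < R := by linarith
  have hαR : 2*c*k + |F₀| + 1 ≤ α*R := by
    have : (2*c*k + |F₀| + 1)/α ≤ R := le_max_right _ _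
    calc 2*c*k + |F₀| + 1 = ((2*c*k + |F₀| + 1)/α)*α := by field_simp
      _ ≤ R*α := mul_le_mul_of_nonneg_right this hα.le
      _ = α*R := mul_comm _ _
  have hlogR_le : Real.log R ≤ R := by
    linarith [Real.log_le_sub_one_of_pos hRpos]
  have hlogR_nn : 0 ≤ Real.log R := Real.log_nonneg hR1
  -- choose ε
  set ε : ℝ := Real.exp (-(F₀ + 2*c*k*R + 1)/(2*c)) with hε
  have hε0 : 0 < ε := Real.exp_pos _
  have hlogε : Real.log ε = -(F₀ + 2*c*k*R + 1)/(2*c) := Real.log_exp _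
  have hckR : 0 ≤ 2*c*k*R := by positivity
  have hε1 : ε < 1 := by
    rw [hε, Real.exp_lt_one_iff]
    apply div_neg_of_neg_of_pos <;> [linarith; linarith]
  -- compact box
  set K : Set (Fin k → ℝ) := Set.univ.pi (fun _ => Set.Icc ε R) with hK
  have hKc : IsCompact K := isCompact_univ_pi fun _ => isCompact_Icc
  have hwK : w ∈ K := by
    intro i _
    exact ⟨hε1.le, hR1⟩
  have hmemK : ∀ Λ ∈ K, ∀ i, ε ≤ Λ i ∧ Λ i ≤ R := by
    intro Λ hΛ i
    exact hΛ i (Set.mem_univ i)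
  -- continuity of f on K
  have hfc : ContinuousOn f K := by
    apply ContinuousOn.sub (bal_quad_cont A).continuousOn
    apply ContinuousOn.mul continuousOn_const
    intro Λ hΛ
    apply ContinuousAt.continuousWithinAt
    exact tendsto_finset_sum _ fun i _ =>
      (Real.continuousAt_log (by linarith [(hmemK Λ hΛ i).1])).comp
        (continuous_apply i).continuousAt
  obtain ⟨Λ₀, hΛ₀K, hmin⟩ := hKc.exists_isMinOn ⟨w, hwK⟩ hfc
  have hfΛ₀ : f Λ₀ ≤ F₀ := hfw ▸ hmin hwK
  have hΛ₀mem := hmemK Λ₀ hΛ₀K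
  -- sum of logs bound
  have hlog_le : ∀ i, Real.log (Λ₀ i) ≤ Real.log R := by
    intro i
    exact Real.log_le_log (lt_of_lt_of_le hε0 (hΛ₀mem i).1) (hΛ₀mem i).2
  have hquad_nn : 0 ≤ Λ₀ ⬝ᵥ A.mulVec Λ₀ := by simpa using hA.posSemidef.dotProduct_mulVec_nonneg Λ₀
  -- interior: lower bound
  have hlower : ∀ j, ε < Λ₀ j := by
    intro j
    rcases lt_or_eq_of_le (hΛ₀mem j).1 with h | h
    · exact h
    have hsum : ∑ i, Real.log (Λ₀ i) ≤ Real.log ε + k * Real.log R := by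
      rw [← Finset.add_sum_erase _ _ (Finset.mem_univ j), ← h]
      have h1 : ∑ i ∈ Finset.univ.erase j, Real.log (Λ₀ i)
          ≤ ∑ i ∈ Finset.univ.erase j, Real.log R :=
        Finset.sum_le_sum fun i _ => hlog_le i
      have h2 : ∑ i ∈ Finset.univ.erase j, Real.log R
          = ((Finset.univ.erase j).card : ℝ) * Real.log R := by
        rw [Finset.sum_const, nsmul_eq_mul]
      have h3 : ((Finset.univ.erase j).card : ℝ) ≤ (k : ℝ) := by
        have := Finset.card_erase_le (a := j) (s := (Finset.univ : Finset (Fin k)))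
        simp only [Finset.card_univ, Fintype.card_fin] at this
        exact_mod_cast this
      have h4 : ((Finset.univ.erase j).card : ℝ) * Real.log R ≤ k * Real.log R :=
        mul_le_mul_of_nonneg_right h3 hlogR_nn
      linarith
    have hflow : F₀ + 1 ≤ f Λ₀ := by
      have hεpart : -(2*c) * Real.log ε = F₀ + 2*c*k*R + 1 := by
        rw [hlogε]; field_simp
      have hck : 2*c*(k:ℝ) * Real.log R ≤ 2*c*k*R := by
        apply mul_le_mul_of_nonneg_left hlogR_le
        positivity
      have : f Λ₀ = Λ₀ ⬝ᵥ A.mulVec Λ₀ - 2*c*∑ i, Real.log (Λ₀ i) := rfl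
      nlinarith [mul_le_mul_of_nonneg_left hsum (by positivity : (0:ℝ) ≤ 2*c)]
    linarith
  -- interior: upper bound
  have hupper : ∀ j, Λ₀ j < R := by
    intro j
    rcases lt_or_eq_of_le (hΛ₀mem j).2 with h | h
    · exact h
    have hnorm : R ≤ ‖Λ₀‖ := by
      calc R = |Λ₀ j| := by rw [h]; exact (abs_of_pos (by linarith [(hΛ₀mem j).1])).symm
        _ = ‖Λ₀ j‖ := rfl
        _ ≤ ‖Λ₀‖ := norm_le_pi_norm Λ₀ j
    have hquad : α * R^2 ≤ Λ₀ ⬝ᵥ A.mulVec Λ₀ := by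
      have hsq : R^2 ≤ ‖Λ₀‖^2 := by
        nlinarith [mul_le_mul hnorm hnorm hRpos.le (norm_nonneg Λ₀)]
      have h1 : α * R^2 ≤ α * ‖Λ₀‖^2 := mul_le_mul_of_nonneg_left hsq hα.le
      linarith [hcoer Λ₀]
    have hsum : ∑ i, Real.log (Λ₀ i) ≤ k * Real.log R := by
      calc ∑ i, Real.log (Λ₀ i) ≤ ∑ _i : Fin k, Real.log R :=
            Finset.sum_le_sum fun i _ => hlog_le i
        _ = k * Real.log R := by rw [Finset.sum_const, nsmul_eq_mul]; simp
    have hflow : F₀ + 1 ≤ f Λ₀ := by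
      have habs : F₀ ≤ |F₀| := le_abs_self _
      have hck : 2*c*(k:ℝ) * Real.log R ≤ 2*c*k*R := by
        apply mul_le_mul_of_nonneg_left hlogR_le
        positivity
      have hR2' : α*R*R ≥ (2*c*k + |F₀| + 1)*R := mul_le_mul_of_nonneg_right hαR hRpos.le
      have : f Λ₀ = Λ₀ ⬝ᵥ A.mulVec Λ₀ - 2*c*∑ i, Real.log (Λ₀ i) := rfl
      nlinarith [mul_le_mul_of_nonneg_left hsum (by positivity : (0:ℝ) ≤ 2*c)]
    linarith
  have hΛ₀pos : ∀ j, 0 < Λ₀ j := fun j => lt_of_lt_of_le hε0 (hΛ₀mem j).1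
  -- critical point equation
  have hcrit : ∀ j, Λ₀ j * A.mulVec Λ₀ j = c := by
    intro j
    set e : Fin k → ℝ := Pi.single j 1 with he
    set b : ℝ := A.mulVec Λ₀ j with hb
    set d : ℝ := e ⬝ᵥ A.mulVec e with hd
    set a : ℝ := Λ₀ ⬝ᵥ A.mulVec Λ₀ with ha
    set Sr : ℝ := ∑ i ∈ Finset.univ.erase j, Real.log (Λ₀ i) with hSr
    set g : ℝ → ℝ :=
      fun t => a + 2*b*t + d*t^2 - 2*c*(Real.log (Λ₀ j + t) + Sr) with hg
    have hgf : ∀ t, f (Λ₀ + t • e) = g t := by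
      intro t
      have hquad : (Λ₀ + t • e) ⬝ᵥ A.mulVec (Λ₀ + t • e) = a + 2*b*t + d*t^2 := by
        have h1 : e ⬝ᵥ A.mulVec Λ₀ = b := by rw [he, bal_single_dot]
        have h2 : Λ₀ ⬝ᵥ A.mulVec e = b := by rw [bal_symm_dot A hA, h1]
        rw [mulVec_add, mulVec_smul, dotProduct_add, add_dotProduct, add_dotProduct,
          smul_dotProduct, dotProduct_smul, dotProduct_smul, smul_dotProduct]
        simp only [smul_eq_mul, h1, h2, ← ha, ← hd]
        ring
      have hlog : ∑ i, Real.log ((Λ₀ + t • e) i) = Real.log (Λ₀ j + t) + Sr := by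
        rw [← Finset.add_sum_erase _ _ (Finset.mem_univ j)]
        congr 1
        · congr 1
          simp [he]
        · apply Finset.sum_congr rfl
          intro i hi
          have hij : i ≠ j := Finset.ne_of_mem_erase hi
          congr 1
          simp [he, Pi.single_eq_of_ne hij]
      rw [hf]
      simp only [hquad, hlog, hg]
    have hΛ₀j := hΛ₀pos j
    -- local min of g at 0
    have hU : IsOpen (Set.univ.pi (fun _ : Fin k => Set.Ioo ε R)) :=
      isOpen_set_pi Set.finite_univ (fun _ _ => isOpen_Ioo)
    have hΛ₀U : Λ₀ ∈ Set.univ.pi (fun _ : Fin k => Set.Ioo ε R) := by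
      intro i _
      exact ⟨hlower i, hupper i⟩
    have hφ : Continuous fun t : ℝ => Λ₀ + t • e := by fun_prop
    have hloc : IsLocalMin g 0 := by
      have hmem : ∀ᶠ t in nhds (0:ℝ), (Λ₀ + t • e) ∈ Set.univ.pi (fun _ : Fin k => Set.Ioo ε R) := by
        have : (0:ℝ) ∈ (fun t : ℝ => Λ₀ + t • e) ⁻¹' (Set.univ.pi (fun _ : Fin k => Set.Ioo ε R)) := by
          simp [hΛ₀U]
        exact (hU.preimage hφ).mem_nhds this
      filter_upwards [hmem] with t ht
      have htK : (Λ₀ + t • e) ∈ K := fun i hi => Set.Ioo_subset_Icc_self (ht i hi)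
      have h0 : g 0 = f Λ₀ := by
        rw [← hgf 0]; norm_num
      rw [h0, ← hgf t]
      exact hmin htK
    -- derivative of g
    have hderiv : HasDerivAt g (2*b + 2*d*0 - 2*c*(1/(Λ₀ j + 0))) 0 := by
      have h1 : HasDerivAt (fun t : ℝ => a + 2*b*t + d*t^2) (2*b + 2*d*0) 0 := by
        have ha1 : HasDerivAt (fun t : ℝ => a + 2*b*t) (2*b) 0 := by
          simpa using (hasDerivAt_id (0:ℝ)).const_mul (2*b) |>.const_add a
        have ha2 : HasDerivAt (fun t : ℝ => d*t^2) (d*(2*0)) 0 := by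
          simpa using (hasDerivAt_pow 2 (0:ℝ)).const_mul d
        have := ha1.add ha2
        simpa [mul_comm, Pi.add_def] using this
      have h2 : HasDerivAt (fun t : ℝ => Real.log (Λ₀ j + t) + Sr) (1/(Λ₀ j + 0)) 0 := by
        have hb1 : HasDerivAt (fun t : ℝ => Λ₀ j + t) 1 0 := by
          simpa using (hasDerivAt_id (0:ℝ)).const_add (Λ₀ j)
        have hb2 := hb1.log (by linarith : Λ₀ j + 0 ≠ 0)
        simpa [one_div] using hb2.add_const Sr
      simpa [Pi.sub_def] using h1.sub ((h2.const_mul (2*c)))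
    have hzero := hloc.hasDerivAt_eq_zero hderiv
    have : 2*b - 2*c/(Λ₀ j) = 0 := by
      rw [add_zero] at hzero
      field_simp at hzero ⊢
      linarith
    have hbc : b = c / Λ₀ j := by
      field_simp at this ⊢
      linarith
    rw [hbc]
    field_simp
  exact ⟨Λ₀, ⟨hΛ₀pos, hcrit⟩, fun M ⟨hMpos, hMeq⟩ =>
    bal_uniq A hA c hc M Λ₀ hMpos hΛ₀pos hMeq hcrit⟩
end

section
/- Let n ≥ 3, let a ∈ (−n, −2) (so that the exponent γ = a + 2 satisfies 2 − n < γ < 0), and let e ∈ ℝⁿ. Suppose φ : ℝⁿ × (−∞, 0] → ℝ is continuous, is C² in the space variable and C¹ in the time variable on (ℝⁿ ∖ {e}) × (−∞, 0], satisfies the heat equation ∂φ/∂t (y,t) = Δ_y φ(y,t) for all y ≠ e and t ≤ 0, and satisfies the pointwise bound |φ(y,t)| ≤ |y − e|^{a+2} for all y ∈ ℝⁿ ∖ {e} and t ≤ 0. Then φ is identically zero. -/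
open Filter Topology


open Real Set

/-- The Euclidean Laplacian: sum of second partial derivatives. -/
noncomputable def lap {n : ℕ} (f : EuclideanSpace ℝ (Fin n) → ℝ)
    (x : EuclideanSpace ℝ (Fin n)) : ℝ :=
  ∑ i : Fin n,
    fderiv ℝ (fun y => fderiv ℝ f y (EuclideanSpace.single i 1)) x (EuclideanSpace.single i 1)


/-- One-dimensional second derivative test at a local max. -/
lemma second_deriv_test {h h' : ℝ → ℝ} {L : ℝ}
    (hh : ∀ᶠ s in 𝓝 (0:ℝ), HasDerivAt h (h' s) s)
    (hh' : HasDerivAt h' L 0) (hmax : IsLocalMax h 0) : L ≤ 0 := by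
  by_contra hL
  push_neg at hL
  -- h' 0 = 0
  have hd0 : HasDerivAt h (h' 0) 0 := hh.self_of_nhds
  have h'0 : h' 0 = 0 := by
    have := hmax.deriv_eq_zero
    rwa [hd0.deriv] at this
  -- slope of h' tends to L > 0
  have hslope : Tendsto (slope h' 0) (𝓝[≠] (0:ℝ)) (𝓝 L) :=
    hasDerivAt_iff_tendsto_slope.mp hh'
  have hev : ∀ᶠ s in 𝓝[≠] (0:ℝ), 0 < slope h' 0 s :=
    hslope.eventually (eventually_gt_nhds hL)
  have hev' : ∀ᶠ s in 𝓝 (0:ℝ), s ≠ 0 → 0 < slope h' 0 s := by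
    rwa [eventually_nhdsWithin_iff] at hev
  obtain ⟨δ, hδpos, hδ⟩ := Metric.eventually_nhds_iff.mp (hev'.and hh)
  -- h is strictly monotone on [0, δ/2]
  have hmono : StrictMonoOn h (Icc 0 (δ/2)) := by
    apply strictMonoOn_of_deriv_pos (convex_Icc _ _)
    · intro x hx
      rcases eq_or_ne x 0 with rfl | hx0
      · exact hd0.continuousAt.continuousWithinAt
      · have hxδ : dist x (0:ℝ) < δ := by
          rw [Real.dist_eq, sub_zero]
          rcases hx with ⟨h1, h2⟩
          rw [abs_of_nonneg h1]; linarith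
        exact ((hδ hxδ).2).continuousAt.continuousWithinAt
    · intro x hx
      rw [interior_Icc] at hx
      have hxδ : dist x (0:ℝ) < δ := by
        rw [Real.dist_eq, sub_zero, abs_of_nonneg hx.1.le]
        rcases hx with ⟨h1, h2⟩; linarith
      have hds := hδ hxδ
      rw [(hds.2).deriv]
      have hsl := hds.1 (ne_of_gt hx.1)
      rw [slope_def_field, h'0, sub_zero, sub_zero, div_pos_iff] at hsl
      rcases hsl with ⟨hnum, _⟩ | ⟨_, hden⟩
      · exact hnum
      · linarith [hx.1]
  -- contradiction with local max
  obtain ⟨ε, hεpos, hε⟩ := Metric.eventually_nhds_iff.mp hmax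
  set s := min (δ/2) (ε/2) with hs
  have hspos : 0 < s := lt_min (by linarith) (by linarith)
  have h1 : h 0 < h s := hmono ⟨le_rfl, by positivity⟩ ⟨hspos.le, min_le_left _ _⟩ hspos
  have h2 : h s ≤ h 0 := hε (by
    rw [Real.dist_eq, sub_zero, abs_of_nonneg hspos.le]
    exact lt_of_le_of_lt (min_le_right _ _) (by linarith))
  linarith

/-- Left derivative at an endpoint max is nonnegative. -/
lemma left_deriv_nonneg {u : ℝ → ℝ} {T t d : ℝ} (hT : T < t)
    (hd : HasDerivWithinAt u d (Icc T t) t)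
    (hmax : ∀ r ∈ Icc T t, u r ≤ u t) : 0 ≤ d := by
  have hslope : Tendsto (slope u t) (𝓝[Icc T t \ {t}] t) (𝓝 d) :=
    hasDerivWithinAt_iff_tendsto_slope.mp hd
  have hne : (𝓝[Icc T t \ {t}] t).NeBot := by
    have hsub : Ioo T t ⊆ Icc T t \ {t} := fun x hx =>
      ⟨⟨hx.1.le, hx.2.le⟩, ne_of_lt hx.2⟩
    have h1 : NeBot (𝓝[Ioo T t] t) := right_nhdsWithin_Ioo_neBot hT
    exact h1.mono (nhdsWithin_mono _ hsub)
  refine ge_of_tendsto hslope ?_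
  filter_upwards [self_mem_nhdsWithin] with r hr
  rcases hr with ⟨hrIcc, hrne⟩
  have hrt : r < t := lt_of_le_of_ne hrIcc.2 (by simpa using hrne)
  rw [slope_def_field]
  have h1 : u r - u t ≤ 0 := by linarith [hmax r hrIcc]
  have h2 : r - t < 0 := by linarith
  exact div_nonneg_of_nonpos h1 h2.le


lemma line_hasDerivAt {n : ℕ} {f : EuclideanSpace ℝ (Fin n) → ℝ} {U : Set (EuclideanSpace ℝ (Fin n))}
    (hU : IsOpen U) (hf : ContDiffOn ℝ 2 f U) {x : EuclideanSpace ℝ (Fin n)} (hx : x ∈ U)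
    (v : EuclideanSpace ℝ (Fin n)) :
    (∀ᶠ s in 𝓝 (0:ℝ), HasDerivAt (fun s => f (x + s • v)) (fderiv ℝ f (x + s • v) v) s) ∧
    HasDerivAt (fun s => fderiv ℝ f (x + s • v) v)
      (fderiv ℝ (fun y => fderiv ℝ f y v) x v) (0:ℝ) := by
  have hline : ∀ s : ℝ, HasDerivAt (fun s : ℝ => x + s • v) v s := by
    intro s
    simpa using ((hasDerivAt_id s).smul_const v).const_add x
  have hopen : IsOpen {s : ℝ | x + s • v ∈ U} :=
    (hU.preimage (continuous_const.add (continuous_id.smul continuous_const) : Continuous fun s : ℝ => x + s • v))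
  have h0 : (0:ℝ) ∈ {s : ℝ | x + s • v ∈ U} := by simpa using hx
  constructor
  · filter_upwards [hopen.mem_nhds h0] with s hs
    have hdf : DifferentiableAt ℝ f (x + s • v) :=
      (hf.contDiffAt (hU.mem_nhds hs)).differentiableAt (by norm_num)
    exact hdf.hasFDerivAt.comp_hasDerivAt s (hline s)
  · have hF : ContDiffOn ℝ 1 (fderiv ℝ f) U := hf.fderiv_of_isOpen hU (by norm_num)
    have hFd : DifferentiableAt ℝ (fderiv ℝ f) x :=
      (hF.contDiffAt (hU.mem_nhds hx)).differentiableAt one_ne_zero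
    have hG : DifferentiableAt ℝ (fun y => fderiv ℝ f y v) x :=
      hFd.clm_apply (differentiableAt_const v)
    have hx0 : x = x + (0:ℝ) • v := by simp
    rw [hx0] at hG
    have := hG.hasFDerivAt.comp_hasDerivAt 0 (hline 0)
    simp only [← hx0] at this
    exact this

lemma lap_le_of_isLocalMax {n : ℕ} {f b : EuclideanSpace ℝ (Fin n) → ℝ}
    {U : Set (EuclideanSpace ℝ (Fin n))} (hU : IsOpen U) (hf : ContDiffOn ℝ 2 f U)
    {x : EuclideanSpace ℝ (Fin n)} (hx : x ∈ U)
    {b' : Fin n → ℝ → ℝ} {Lb : Fin n → ℝ}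
    (hb : ∀ i, ∀ᶠ s in 𝓝 (0:ℝ),
      HasDerivAt (fun s => b (x + s • EuclideanSpace.single i 1)) (b' i s) s)
    (hb' : ∀ i, HasDerivAt (b' i) (Lb i) 0)
    (hmax : IsLocalMax (fun y => f y - b y) x) :
    lap f x ≤ ∑ i, Lb i := by
  rw [lap]
  apply Finset.sum_le_sum
  intro i _
  set v := EuclideanSpace.single (𝕜 := ℝ) i (1:ℝ) with hv
  obtain ⟨hev, hsec⟩ := line_hasDerivAt hU hf hx v
  have hmax' : IsLocalMax (fun s : ℝ => f (x + s • v) - b (x + s • v)) 0 := by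
    have : IsLocalMax ((fun y => f y - b y) ∘ (fun s : ℝ => x + s • v)) 0 := by
      apply IsLocalMax.comp_continuous
      · simpa using hmax
      · exact (continuous_const.add (continuous_id.smul continuous_const)).continuousAt
    exact this
  have key := second_deriv_test (h := fun s => f (x + s • v) - b (x + s • v))
    (h' := fun s => fderiv ℝ f (x + s • v) v - b' i s)
    (L := fderiv ℝ (fun y => fderiv ℝ f y v) x v - Lb i)
    (by filter_upwards [hev, hb i] with s h1 h2 using h1.sub h2)
    (hsec.sub (hb' i)) hmax'
  linarith

lemma barrier_line {n : ℕ} (e x : EuclideanSpace ℝ (Fin n)) (hx : x ≠ e)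
    (ε K C₀ c : ℝ) (i : Fin n) :
    ∃ b' : ℝ → ℝ,
      (∀ᶠ s in 𝓝 (0:ℝ), HasDerivAt
        (fun s => ε * (‖(x + s • EuclideanSpace.single i 1) - e‖^2) ^ (c/2) + C₀
          - K * ‖(x + s • EuclideanSpace.single i 1) - e‖^2) (b' s) s) ∧
      HasDerivAt b'
        (ε * (c*(c-2) * (‖x-e‖^2)^(c/2-2) * ((x - e) i)^2 + c * (‖x-e‖^2)^(c/2-1)) - 2*K) 0 := by
  set v := EuclideanSpace.single (i : Fin n) (1:ℝ) with hv
  set d := (x - e) i with hd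
  set q : ℝ → ℝ := fun s => ‖x - e‖^2 + 2*d*s + s^2 with hqdef
  have hident : ∀ s : ℝ, ‖(x + s • v) - e‖^2 = q s := by
    intro s
    have : (x + s • v) - e = (x - e) + s • v := by abel
    rw [this, norm_add_sq_real, real_inner_smul_right]
    have h1 : (inner ℝ (x - e) v : ℝ) = d := by
      rw [hv, EuclideanSpace.inner_single_right]
      simp [hd]
    have h2 : ‖s • v‖ = |s| := by
      rw [norm_smul, hv, EuclideanSpace.norm_single]
      simp
    rw [h1, h2, sq_abs]
    simp [hqdef]
    ring
  have hq : ∀ s : ℝ, HasDerivAt q (2*d + 2*s) s := by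
    intro s
    have h1 : HasDerivAt (fun s : ℝ => ‖x - e‖^2 + 2*d*s + s^2)
        (0 + 2*d*1 + ↑2*s^(2-1)) s :=
      (((hasDerivAt_const s (‖x - e‖^2)).add ((hasDerivAt_id s).const_mul (2*d))).add
        (hasDerivAt_pow 2 s))
    convert h1 using 1
    push_cast
    ring
  have hq0 : q 0 = ‖x - e‖^2 := by simp [hqdef]
  have hq0pos : 0 < q 0 := by
    rw [hq0]
    have h : x - e ≠ 0 := sub_ne_zero.mpr hx
    have := norm_pos_iff.mpr h
    positivity
  have hqcont : ContinuousAt q 0 := (hq 0).differentiableAt.continuousAt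
  have hqev : ∀ᶠ s in 𝓝 (0:ℝ), 0 < q s := hqcont.eventually (eventually_gt_nhds hq0pos)
  refine ⟨fun s => ε * ((2*d+2*s) * (c/2) * q s ^ (c/2-1)) - K * (2*d+2*s), ?_, ?_⟩
  · filter_upwards [hqev] with s hqs
    have hrpow : HasDerivAt (fun s => q s ^ (c/2)) ((2*d+2*s) * (c/2) * q s ^ (c/2-1)) s :=
      (hq s).rpow_const (Or.inl (ne_of_gt hqs))
    have := ((hrpow.const_mul ε).add_const C₀).sub ((hq s).const_mul K)
    have hfun : (fun s => ε * (‖(x + s • v) - e‖^2) ^ (c/2) + C₀ - K * ‖(x + s • v) - e‖^2)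
        = fun s => ε * q s ^ (c/2) + C₀ - K * q s := by
      funext s; rw [hident s]
    rw [hfun]
    exact this
  · have h1 : HasDerivAt (fun s : ℝ => 2*d+2*s) 2 0 := by
      simpa using ((hasDerivAt_id (0:ℝ)).const_mul 2).const_add (2*d)
    have h2 : HasDerivAt (fun s => q s ^ (c/2-1))
        ((2*d+2*0) * (c/2-1) * q 0 ^ (c/2-1-1)) 0 :=
      (hq 0).rpow_const (Or.inl (ne_of_gt hq0pos))
    have h3 := h1.mul h2
    have h4 := (h3.const_mul (ε * (c/2))).sub (h1.const_mul K)
    have hfun : (fun s => ε * ((2*d+2*s) * (c/2) * q s ^ (c/2-1)) - K * (2*d+2*s))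
        = fun s => ε * (c/2) * ((2*d+2*s) * q s ^ (c/2-1)) - K * (2*d+2*s) := by
      funext s; ring
    rw [hfun]
    refine h4.congr_deriv ?_
    rw [hq0]
    have he1 : c/2-1-1 = c/2-2 := by ring
    rw [he1]
    ring

lemma barrier_sum {n : ℕ} (e x : EuclideanSpace ℝ (Fin n)) (hx : x ≠ e) (ε K c : ℝ) :
    ∑ i : Fin n, (ε * (c*(c-2) * (‖x-e‖^2)^(c/2-2) * ((x - e) i)^2
        + c * (‖x-e‖^2)^(c/2-1)) - 2*K)
      = ε * (c * (c + n - 2) * (‖x-e‖^2)^(c/2-1)) - 2*n*K := by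
  have hne : x - e ≠ 0 := sub_ne_zero.mpr hx
  have hnorm : (0:ℝ) < ‖x - e‖ := norm_pos_iff.mpr hne
  have hQ : (0:ℝ) < ‖x-e‖^2 := by positivity
  have hsum : ∑ i : Fin n, ((x - e) i)^2 = ‖x-e‖^2 := by
    rw [EuclideanSpace.norm_eq, Real.sq_sqrt (by positivity)]
    simp [Real.norm_eq_abs, sq_abs]
  have hpow : ((‖x-e‖^2:ℝ)^(c/2-2)) * ‖x-e‖^2 = (‖x-e‖^2)^(c/2-1) := by
    rw [← Real.rpow_add_one hQ.ne' (c/2-2)]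
    ring_nf
  rw [Finset.sum_sub_distrib, Finset.sum_const, Finset.card_univ, Fintype.card_fin,
    ← Finset.mul_sum, Finset.sum_add_distrib, ← Finset.mul_sum, hsum,
    Finset.sum_const, Finset.card_univ, Fintype.card_fin, nsmul_eq_mul, nsmul_eq_mul]
  linear_combination (ε * c * (c-2)) * hpow

set_option maxHeartbeats 1000000 in
lemma key_ineq (n : ℕ) (hn : 3 ≤ n)
    (a : ℝ) (ha1 : -(n : ℝ) < a) (ha2 : a < -2)
    (e : EuclideanSpace ℝ (Fin n))
    (φ : EuclideanSpace ℝ (Fin n) → ℝ → ℝ)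
    (hcont : ContinuousOn (fun q : EuclideanSpace ℝ (Fin n) × ℝ => φ q.1 q.2)
      (Set.univ ×ˢ Set.Iic (0 : ℝ)))
    (hC2 : ∀ t ≤ (0 : ℝ), ContDiffOn ℝ 2 (fun y => φ y t) {e}ᶜ)
    (hC1 : ∀ y, y ≠ e → ContDiffOn ℝ 1 (φ y) (Set.Iic (0 : ℝ)))
    (hheat : ∀ y, y ≠ e → ∀ t ≤ (0 : ℝ),
      derivWithin (φ y) (Set.Iic (0 : ℝ)) t = lap (fun z => φ z t) y)
    (hbound : ∀ y, y ≠ e → ∀ t ≤ (0 : ℝ), |φ y t| ≤ ‖y - e‖ ^ (a + 2))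
    (r R T t₀ : ℝ) (hr : 0 < r) (hrR : r < R) (hT : T < t₀) (ht₀ : t₀ ≤ 0)
    (y₀ : EuclideanSpace ℝ (Fin n)) (hy₀l : r ≤ ‖y₀ - e‖) (hy₀r : ‖y₀ - e‖ ≤ R) :
    φ y₀ t₀ ≤ r^(a+(n:ℝ)) * (‖y₀-e‖^2)^((2-(n:ℝ))/2) + R^(a+2)
      + (r^(a+2)/R^2) * Real.exp (-(t₀-T)/R^2) * (2*R^2 - ‖y₀-e‖^2) := by
  have hR : (0:ℝ) < R := lt_trans hr hrR
  set c : ℝ := 2 - (n:ℝ) with hc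
  set ε : ℝ := r^(a+(n:ℝ)) with hε
  set δ : ℝ := R^(a+2) with hδ
  set M : ℝ := r^(a+2)/R^2 with hM
  have hεpos : 0 < ε := Real.rpow_pos_of_pos hr _
  have hδpos : 0 < δ := Real.rpow_pos_of_pos hR _
  have hMpos : 0 < M := div_pos (Real.rpow_pos_of_pos hr _) (by positivity)
  clear_value c ε δ M
  set B : EuclideanSpace ℝ (Fin n) → ℝ → ℝ := fun y t =>
    ε * (‖y-e‖^2)^(c/2) + δ + (M * Real.exp (-(t-T)/R^2)) * (2*R^2 - ‖y-e‖^2) with hB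
  clear_value B
  -- the key claim via maximum principle
  have main : ∀ σ > (0:ℝ), ∀ y, r ≤ ‖y - e‖ → ‖y - e‖ ≤ R → ∀ t ∈ Icc T t₀,
      φ y t - B y t - σ*(t-T) ≤ 0 := by
    intro σ hσ
    set A : Set (EuclideanSpace ℝ (Fin n)) := {y | r ≤ ‖y - e‖ ∧ ‖y - e‖ ≤ R} with hA
    set Q : Set (EuclideanSpace ℝ (Fin n) × ℝ) := A ×ˢ Icc T t₀ with hQ
    set w : EuclideanSpace ℝ (Fin n) × ℝ → ℝ := fun p => φ p.1 p.2 - B p.1 p.2 - σ*(p.2-T)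
      with hw
    have hnormc : Continuous fun y : EuclideanSpace ℝ (Fin n) => ‖y - e‖ :=
      (continuous_id.sub continuous_const).norm
    have hAe : ∀ y ∈ A, y ≠ e := by
      intro y hy hye
      have h1 := hy.1
      rw [hye, sub_self, norm_zero] at h1
      linarith
    have hAne : ∀ y ∈ A, y - e ≠ 0 := fun y hy => sub_ne_zero.mpr (hAe y hy)
    have hQsub : Q ⊆ Set.univ ×ˢ Set.Iic (0:ℝ) := by
      rintro ⟨y, t⟩ ⟨hy, ht⟩
      exact ⟨trivial, le_trans ht.2 ht₀⟩
    have hQt : ∀ p ∈ Q, p.2 ≤ (0:ℝ) := fun p hp => le_trans hp.2.2 ht₀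
    -- compactness
    have hAclosed : IsClosed A := by
      have : A = (fun y => ‖y - e‖) ⁻¹' (Icc r R) := rfl
      rw [this]
      exact isClosed_Icc.preimage hnormc
    have hAcompact : IsCompact A := by
      apply Metric.isCompact_of_isClosed_isBounded hAclosed
      apply (Metric.isBounded_closedBall (x := e) (r := R)).subset
      intro y hy
      rw [Metric.mem_closedBall, dist_eq_norm]
      exact hy.2
    have hQcompact : IsCompact Q := hAcompact.prod isCompact_Icc
    have hQne : (y₀, t₀) ∈ Q := by
      constructor
      · exact ⟨hy₀l, hy₀r⟩
      · exact ⟨le_of_lt hT, le_rfl⟩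
    -- continuity of w on Q
    have hBcont : ContinuousOn (fun p : EuclideanSpace ℝ (Fin n) × ℝ => B p.1 p.2) Q := by
      rw [hB]
      apply ContinuousOn.add
      apply ContinuousOn.add
      · apply ContinuousOn.mul continuousOn_const
        apply ContinuousOn.rpow_const
        · exact ((hnormc.comp continuous_fst).pow 2).continuousOn
        · intro p hp
          left
          have h0 : 0 < ‖p.1 - e‖ := norm_pos_iff.mpr (hAne p.1 hp.1)
          positivity
      · exact continuousOn_const
      · apply ContinuousOn.mul
        · apply ContinuousOn.mul continuousOn_const
          apply Continuous.continuousOn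
          exact Real.continuous_exp.comp
            (((continuous_snd.sub continuous_const).neg).div_const _)
        · exact (continuous_const.sub ((hnormc.comp continuous_fst).pow 2)).continuousOn
    have hwcont : ContinuousOn w Q := by
      apply ContinuousOn.sub
      apply ContinuousOn.sub
      · exact hcont.mono hQsub
      · exact hBcont
      · exact (continuous_const.mul (continuous_snd.sub continuous_const)).continuousOn
    obtain ⟨p, hpQ, hpmax⟩ := hQcompact.exists_isMaxOn ⟨(y₀, t₀), hQne⟩ hwcont
    obtain ⟨ys, ts⟩ := p
    have hysA : ys ∈ A := hpQ.1
    have htsI : ts ∈ Icc T t₀ := hpQ.2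
    have hts0 : ts ≤ 0 := le_trans htsI.2 ht₀
    have hyse : ys ≠ e := hAe ys hysA
    have hysne : ys - e ≠ 0 := hAne ys hysA
    have hysnorm : 0 < ‖ys - e‖ := norm_pos_iff.mpr hysne
    -- key bound for φ values in Q
    have hφle : ∀ p ∈ Q, φ p.1 p.2 ≤ ‖p.1 - e‖^(a+2) := by
      intro p hp
      exact le_trans (le_abs_self _) (hbound p.1 (hAe p.1 hp.1) p.2 (hQt p hp))
    -- positivity facts about B
    have hBge : ∀ p ∈ Q, (0:ℝ) ≤ (M * Real.exp (-(p.2-T)/R^2)) * (2*R^2 - ‖p.1-e‖^2) := by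
      intro p hp
      apply mul_nonneg (mul_nonneg hMpos.le (Real.exp_pos _).le)
      nlinarith [hp.1.2, norm_nonneg (p.1 - e), hp.1.1]
    -- boundary estimates: w ≤ 0 on the parabolic boundary
    have hbdry : ∀ p ∈ Q, (‖p.1 - e‖ = r ∨ ‖p.1 - e‖ = R ∨ p.2 = T) → w p ≤ 0 := by
      rintro ⟨y, t⟩ hp hcase
      dsimp only at hcase
      have hyA : y ∈ A := hp.1
      have htI : t ∈ Icc T t₀ := hp.2
      have hyne := hAne y hyA
      have hynorm : 0 < ‖y - e‖ := norm_pos_iff.mpr hyne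
      have hφ := hφle (y, t) hp
      have hσt : 0 ≤ σ*(t-T) := mul_nonneg hσ.le (by linarith [htI.1])
      have hsq : (‖y-e‖^2)^(c/2) = ‖y-e‖^c := by
        rw [← Real.rpow_natCast ‖y-e‖ 2, ← Real.rpow_mul (norm_nonneg _)]
        ring_nf
      have hBval : (0:ℝ) ≤ (M * Real.exp (-(t-T)/R^2)) * (2*R^2 - ‖y-e‖^2) := hBge (y,t) hp
      rcases hcase with hcr | hcR | hcT
      · -- inner boundary
        have : ε * (‖y-e‖^2)^(c/2) = r^(a+2) := by
          rw [hsq, hcr, hε, hc, ← Real.rpow_add hr]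
          norm_num
        have hφ' : φ y t ≤ r^(a+2) := by rw [← hcr]; exact hφ
        simp only [hw, hB]
        linarith
      · -- outer boundary
        have hφ' : φ y t ≤ δ := by rw [hδ, ← hcR]; exact hφ
        have h1 : 0 ≤ ε * (‖y-e‖^2)^(c/2) :=
          mul_nonneg hεpos.le (Real.rpow_nonneg (by positivity) _)
        simp only [hw, hB]
        linarith
      · -- initial time
        have hφ' : φ y t ≤ r^(a+2) := by
          refine le_trans hφ ?_
          exact Real.rpow_le_rpow_of_nonpos hr hyA.1 (by linarith)
        have hexp : Real.exp (-(t-T)/R^2) = 1 := by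
          rw [hcT, sub_self, neg_zero, zero_div, Real.exp_zero]
        have h1 : 0 ≤ ε * (‖y-e‖^2)^(c/2) :=
          mul_nonneg hεpos.le (Real.rpow_nonneg (by positivity) _)
        have h2 : (M * Real.exp (-(t-T)/R^2)) * (2*R^2 - ‖y-e‖^2) ≥ r^(a+2) := by
          rw [hexp, mul_one, hM]
          have h3 : 2*R^2 - ‖y-e‖^2 ≥ R^2 := by nlinarith [hyA.2, norm_nonneg (y-e)]
          have h4 : (0:ℝ) < r^(a+2) := Real.rpow_pos_of_pos hr _
          rw [div_mul_eq_mul_div, ge_iff_le, le_div_iff₀ (by positivity)]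
          nlinarith [h3, h4]
        simp only [hw, hB]
        have hσT : σ*(t-T) = 0 := by rw [hcT]; ring
        linarith
    -- suppose the max is positive; derive contradiction
    have hwp : w (ys, ts) ≤ 0 := by
      by_contra hpos
      push_neg at hpos
      -- the max point is not on the parabolic boundary
      have hnotbdry : ¬(‖ys - e‖ = r ∨ ‖ys - e‖ = R ∨ ts = T) := by
        intro hcase
        linarith [hbdry (ys, ts) hpQ hcase]
      push_neg at hnotbdry
      obtain ⟨hne_r, hne_R, hne_T⟩ := hnotbdry
      have hrlt : r < ‖ys - e‖ := lt_of_le_of_ne hysA.1 (Ne.symm hne_r)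
      have hRgt : ‖ys - e‖ < R := lt_of_le_of_ne hysA.2 hne_R
      have hTlt : T < ts := lt_of_le_of_ne htsI.1 (Ne.symm hne_T)
      set K : ℝ := M * Real.exp (-(ts-T)/R^2) with hK
      have hKpos : 0 < K := mul_pos hMpos (Real.exp_pos _)
      clear_value K
      -- spatial local max
      have hU : IsOpen {y : EuclideanSpace ℝ (Fin n) | r < ‖y - e‖ ∧ ‖y - e‖ < R} := by
        have : {y : EuclideanSpace ℝ (Fin n) | r < ‖y - e‖ ∧ ‖y - e‖ < R}
            = (fun y => ‖y - e‖) ⁻¹' (Ioo r R) := rfl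
        rw [this]
        exact isOpen_Ioo.preimage hnormc
      have hysU : ys ∈ {y : EuclideanSpace ℝ (Fin n) | r < ‖y - e‖ ∧ ‖y - e‖ < R} :=
        ⟨hrlt, hRgt⟩
      have hlocmax : IsLocalMax (fun y => φ y ts - B y ts) ys := by
        filter_upwards [hU.mem_nhds hysU] with y hy
        have hyQ : (y, ts) ∈ Q := ⟨⟨hy.1.le, hy.2.le⟩, htsI⟩
        have h5 : w (y, ts) ≤ w (ys, ts) := hpmax hyQ
        simp only [hw] at h5
        linarith
      -- barrier line derivatives
      set C₀ : ℝ := δ + K * (2*R^2) with hC₀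
      choose b' hb1 hb2 using fun i => barrier_line e ys hyse ε K C₀ c i
      have hBfun : ∀ i : Fin n, (fun s : ℝ => B (ys + s • EuclideanSpace.single i 1) ts)
          = fun s => ε * (‖(ys + s • EuclideanSpace.single i 1) - e‖^2) ^ (c/2) + C₀
            - K * ‖(ys + s • EuclideanSpace.single i 1) - e‖^2 := by
        intro i
        funext s
        simp only [hB, hC₀, hK]
        ring
      have hlap : lap (fun y => φ y ts) ys ≤ -(2*n*K) := by
        have hle := lap_le_of_isLocalMax (isOpen_compl_singleton)
          (hC2 ts hts0) (by simp [hyse] : ys ∈ ({e}ᶜ : Set _))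
          (b' := b') (Lb := fun i => ε * (c*(c-2) * (‖ys-e‖^2)^(c/2-2) * ((ys - e) i)^2
            + c * (‖ys-e‖^2)^(c/2-1)) - 2*K)
          (fun i => by rw [hBfun i]; exact hb1 i) (fun i => hb2 i) hlocmax
        rw [barrier_sum e ys hyse ε K c] at hle
        have hcn : c * (c + n - 2) = 0 := by rw [hc]; ring
        rw [hcn] at hle
        simpa using hle
      -- time derivative at the max
      have hφdiff : DifferentiableWithinAt ℝ (φ ys) (Iic (0:ℝ)) ts :=
        ((hC1 ys hyse).differentiableOn (by norm_num)) ts hts0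
      have hD1 : HasDerivWithinAt (φ ys) (derivWithin (φ ys) (Iic (0:ℝ)) ts) (Iic 0) ts :=
        hφdiff.hasDerivWithinAt
      have hinner : HasDerivAt (fun t : ℝ => -(t-T)/R^2) (-(1/R^2)) ts := by
        have h := (((hasDerivAt_id ts).sub_const T).neg).div_const (R^2)
        simp only [id_eq] at h
        refine h.congr_deriv ?_
        ring
      have hexp := hinner.exp
      have hD2 : HasDerivAt (fun t => B ys t)
          ((M * (Real.exp (-(ts-T)/R^2) * (-(1/R^2)))) * (2*R^2 - ‖ys-e‖^2)) ts := by
        have h := ((hexp.const_mul M).mul_const (2*R^2 - ‖ys-e‖^2)).const_add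
          (ε * (‖ys-e‖^2)^(c/2) + δ)
        simp only [hB]
        exact h
      have hD3 : HasDerivAt (fun t : ℝ => σ*(t-T)) σ ts := by
        simpa using ((hasDerivAt_id ts).sub_const T).const_mul σ
      have hu : HasDerivWithinAt (fun t => w (ys, t))
          (derivWithin (φ ys) (Iic (0:ℝ)) ts
            - (M * (Real.exp (-(ts-T)/R^2) * (-(1/R^2)))) * (2*R^2 - ‖ys-e‖^2) - σ)
          (Icc T ts) ts := by
        refine HasDerivWithinAt.mono ?_ (fun x hx => (le_trans hx.2 hts0 : x ≤ (0:ℝ)))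
        exact (hD1.sub (hD2.hasDerivWithinAt)).sub (hD3.hasDerivWithinAt)
      have humax : ∀ t ∈ Icc T ts, w (ys, t) ≤ w (ys, ts) := by
        intro t ht
        exact hpmax (⟨hysA, ⟨ht.1, le_trans ht.2 htsI.2⟩⟩ : (ys, t) ∈ Q)
      have hd := left_deriv_nonneg hTlt hu humax
      -- assemble contradiction
      rw [hheat ys hyse ts hts0] at hd
      have hDB : (M * (Real.exp (-(ts-T)/R^2) * (-(1/R^2)))) * (2*R^2 - ‖ys-e‖^2)
          ≥ -(2*n*K) := by
        have h1 : 0 ≤ 2*R^2 - ‖ys-e‖^2 := by nlinarith [norm_nonneg (ys-e)]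
        have h2 : 2*R^2 - ‖ys-e‖^2 ≤ 2*R^2 := by nlinarith [hysnorm]
        have h3 : (1:ℝ) ≤ n := by exact_mod_cast le_trans (by norm_num) hn
        have hKR : K / R^2 * (2*R^2) = 2*K := by field_simp
        have : (M * (Real.exp (-(ts-T)/R^2) * (-(1/R^2)))) * (2*R^2 - ‖ys-e‖^2)
            = -(K/R^2 * (2*R^2 - ‖ys-e‖^2)) := by rw [hK]; field_simp; try ring
        rw [this]
        have h4 : K/R^2 * (2*R^2 - ‖ys-e‖^2) ≤ K/R^2 * (2*R^2) :=
          mul_le_mul_of_nonneg_left h2 (div_nonneg hKpos.le (by positivity))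
        rw [hKR] at h4
        nlinarith
      linarith [hlap, hDB, hd, hσ]
    -- conclude from the maximum
    intro y hyl hyr t ht
    have h6 : w (y, t) ≤ w (ys, ts) := hpmax (⟨⟨hyl, hyr⟩, ht⟩ : (y, t) ∈ Q)
    simp only [hw] at h6 hwp ⊢
    linarith
  -- let σ → 0
  have hfinal : φ y₀ t₀ - B y₀ t₀ ≤ 0 := by
    by_contra hcon
    push_neg at hcon
    have hden : (0:ℝ) < 2*(t₀ - T) := by linarith
    have hσpos : 0 < (φ y₀ t₀ - B y₀ t₀) / (2*(t₀ - T)) := div_pos hcon hden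
    have h := main _ hσpos y₀ hy₀l hy₀r t₀ ⟨hT.le, le_rfl⟩
    have h2 : (φ y₀ t₀ - B y₀ t₀) / (2*(t₀ - T)) * (t₀ - T) = (φ y₀ t₀ - B y₀ t₀)/2 := by
      have hne : t₀ - T ≠ 0 := (sub_pos.mpr hT).ne'
      rw [div_mul_eq_mul_div, mul_comm (2:ℝ), ← div_div, mul_div_cancel_right₀ _ hne]
    rw [h2] at h
    linarith
  simp only [hB] at hfinal
  linarith

lemma lap_neg {n : ℕ} (f : EuclideanSpace ℝ (Fin n) → ℝ) (x : EuclideanSpace ℝ (Fin n)) :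
    lap (fun y => -(f y)) x = - lap f x := by
  unfold lap
  rw [← Finset.sum_neg_distrib]
  congr 1
  funext i
  have h1 : (fun y => fderiv ℝ (fun z => -(f z)) y (EuclideanSpace.single i 1))
      = fun y => -(fderiv ℝ f y (EuclideanSpace.single i 1)) := by
    funext y
    rw [fderiv_fun_neg]
    simp
  rw [h1]
  have h2 : (fun y => -(fderiv ℝ f y (EuclideanSpace.single i 1)))
      = fun y => -((fun z => fderiv ℝ f z (EuclideanSpace.single i 1)) y) := rfl
  rw [h2, fderiv_fun_neg]
  simp

lemma upper_bound (n : ℕ) (hn : 3 ≤ n)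
    (a : ℝ) (ha1 : -(n : ℝ) < a) (ha2 : a < -2)
    (e : EuclideanSpace ℝ (Fin n))
    (φ : EuclideanSpace ℝ (Fin n) → ℝ → ℝ)
    (hcont : ContinuousOn (fun q : EuclideanSpace ℝ (Fin n) × ℝ => φ q.1 q.2)
      (Set.univ ×ˢ Set.Iic (0 : ℝ)))
    (hC2 : ∀ t ≤ (0 : ℝ), ContDiffOn ℝ 2 (fun y => φ y t) {e}ᶜ)
    (hC1 : ∀ y, y ≠ e → ContDiffOn ℝ 1 (φ y) (Set.Iic (0 : ℝ)))
    (hheat : ∀ y, y ≠ e → ∀ t ≤ (0 : ℝ),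
      derivWithin (φ y) (Set.Iic (0 : ℝ)) t = lap (fun z => φ z t) y)
    (hbound : ∀ y, y ≠ e → ∀ t ≤ (0 : ℝ), |φ y t| ≤ ‖y - e‖ ^ (a + 2))
    (y : EuclideanSpace ℝ (Fin n)) (hy : y ≠ e) (t : ℝ) (ht : t ≤ 0)
    (η : ℝ) (hη : 0 < η) : φ y t ≤ η := by
  set ρ : ℝ := ‖y - e‖ with hρdef
  have hρ : 0 < ρ := norm_pos_iff.mpr (sub_ne_zero.mpr hy)
  have ha2' : a + 2 < 0 := by linarith
  have han : 0 < a + (n:ℝ) := by linarith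
  -- choose R
  have hRev : ∀ᶠ x : ℝ in Filter.atTop, x ^ (a+2) ≤ η/3 := by
    have h0 : (0:ℝ) < -(a+2) := by linarith
    have := (tendsto_rpow_neg_atTop h0).eventually (eventually_le_nhds (by linarith : (0:ℝ) < η/3))
    simpa using this
  obtain ⟨R, hR⟩ := (hRev.and (Filter.eventually_ge_atTop (ρ + 1))).exists
  obtain ⟨hR3, hRρ⟩ := hR
  have hRpos : 0 < R := by linarith
  -- choose r
  set Cρ : ℝ := (ρ^2) ^ ((2-(n:ℝ))/2) with hCρ
  have hCρpos : 0 < Cρ := Real.rpow_pos_of_pos (by positivity) _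
  set c₁ : ℝ := (η/3)/Cρ with hc₁
  have hc₁pos : 0 < c₁ := by positivity
  set r : ℝ := min ρ (c₁ ^ (a+(n:ℝ))⁻¹) with hrdef
  have hrpos : 0 < r := lt_min hρ (Real.rpow_pos_of_pos hc₁pos _)
  have hrρ : r ≤ ρ := min_le_left _ _
  have hrR : r < R := by
    have := min_le_left ρ (c₁ ^ (a+(n:ℝ))⁻¹)
    linarith
  have hrpow : r ^ (a+(n:ℝ)) ≤ c₁ := by
    have h1 : r ^ (a+(n:ℝ)) ≤ (c₁ ^ (a+(n:ℝ))⁻¹) ^ (a+(n:ℝ)) :=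
      Real.rpow_le_rpow hrpos.le (min_le_right _ _) han.le
    have h2 : (c₁ ^ (a+(n:ℝ))⁻¹) ^ (a+(n:ℝ)) = c₁ := by
      rw [← Real.rpow_mul hc₁pos.le, inv_mul_cancel₀ (ne_of_gt han), Real.rpow_one]
    rwa [h2] at h1
  -- choose T
  set c₂ : ℝ := (η/3)/(2 * r^(a+2)) with hc₂
  have hrapos : 0 < r^(a+2) := Real.rpow_pos_of_pos hrpos _
  have hc₂pos : 0 < c₂ := by positivity
  set T : ℝ := t - R^2 * (max 0 (-Real.log c₂) + 1) with hTdef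
  have hT : T < t := by
    have h1 : 0 < R^2 * (max 0 (-Real.log c₂) + 1) := by
      have := le_max_left (0:ℝ) (-Real.log c₂)
      nlinarith
    rw [hTdef]; linarith
  have hexple : Real.exp (-(t-T)/R^2) ≤ c₂ := by
    have h1 : -(t-T)/R^2 ≤ Real.log c₂ := by
      have hR2 : (R:ℝ)^2 ≠ 0 := by positivity
      have h2 : -(t - T)/R^2 = -(max 0 (-Real.log c₂) + 1) := by
        rw [hTdef]
        field_simp
        ring
      have h4 : -(max 0 (-Real.log c₂) + 1) ≤ Real.log c₂ := by
        have := le_max_right (0:ℝ) (-Real.log c₂)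
        linarith
      rw [h2]
      exact h4
    calc Real.exp (-(t-T)/R^2) ≤ Real.exp (Real.log c₂) := Real.exp_le_exp.mpr h1
      _ = c₂ := Real.exp_log hc₂pos
  -- apply key inequality
  have hkey := key_ineq n hn a ha1 ha2 e φ hcont hC2 hC1 hheat hbound
    r R T t hrpos hrR hT ht y hrρ (by linarith : ‖y - e‖ ≤ R)
  -- bound the three terms
  have ht1 : r^(a+(n:ℝ)) * (ρ^2)^((2-(n:ℝ))/2) ≤ η/3 := by
    have := mul_le_mul_of_nonneg_right hrpow hCρpos.le
    rw [hc₁, div_mul_cancel₀ _ (ne_of_gt hCρpos)] at this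
    exact this
  have ht3 : (r^(a+2)/R^2) * Real.exp (-(t-T)/R^2) * (2*R^2 - ρ^2) ≤ η/3 := by
    have he : 0 < Real.exp (-(t-T)/R^2) := Real.exp_pos _
    have hb1 : (r^(a+2)/R^2) * Real.exp (-(t-T)/R^2) * (2*R^2 - ρ^2)
        ≤ (r^(a+2)/R^2) * Real.exp (-(t-T)/R^2) * (2*R^2) := by
      apply mul_le_mul_of_nonneg_left (by nlinarith) (by positivity)
    have hb2 : (r^(a+2)/R^2) * Real.exp (-(t-T)/R^2) * (2*R^2) = 2 * r^(a+2) * Real.exp (-(t-T)/R^2) := by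
      field_simp
    have hb3 : 2 * r^(a+2) * Real.exp (-(t-T)/R^2) ≤ 2 * r^(a+2) * c₂ :=
      mul_le_mul_of_nonneg_left hexple (by positivity)
    have hb4 : 2 * r^(a+2) * c₂ = η/3 := by
      rw [hc₂]
      field_simp
    linarith [hb1, hb2 ▸ hb1]
  linarith [hkey, ht1, hR3, ht3]


/-- Liouville-type theorem. An ancient solution of the heat equation on
`ℝⁿ ∖ {e}`, continuous on `ℝⁿ × (-∞,0]` and bounded pointwise by `|y-e|^{a+2}` with
`a ∈ (-n,-2)` (so `2-n < a+2 < 0`), vanishes identically. -/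
theorem liouville_ancient_heat (n : ℕ) (hn : 3 ≤ n)
    (a : ℝ) (ha1 : -(n : ℝ) < a) (ha2 : a < -2)
    (e : EuclideanSpace ℝ (Fin n))
    (φ : EuclideanSpace ℝ (Fin n) → ℝ → ℝ)
    (hcont : ContinuousOn (fun q : EuclideanSpace ℝ (Fin n) × ℝ => φ q.1 q.2)
      (Set.univ ×ˢ Set.Iic (0 : ℝ)))
    (hC2 : ∀ t ≤ (0 : ℝ), ContDiffOn ℝ 2 (fun y => φ y t) {e}ᶜ)
    (hC1 : ∀ y, y ≠ e → ContDiffOn ℝ 1 (φ y) (Set.Iic (0 : ℝ)))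
    (hheat : ∀ y, y ≠ e → ∀ t ≤ (0 : ℝ),
      derivWithin (φ y) (Set.Iic (0 : ℝ)) t = lap (fun z => φ z t) y)
    (hbound : ∀ y, y ≠ e → ∀ t ≤ (0 : ℝ), |φ y t| ≤ ‖y - e‖ ^ (a + 2)) :
    ∀ y, ∀ t ≤ (0 : ℝ), φ y t = 0 := by
  -- the negated function satisfies the same hypotheses
  have hcont' : ContinuousOn (fun q : EuclideanSpace ℝ (Fin n) × ℝ => -(φ q.1 q.2))
      (Set.univ ×ˢ Set.Iic (0 : ℝ)) := hcont.neg
  have hC2' : ∀ t ≤ (0 : ℝ), ContDiffOn ℝ 2 (fun y => -(φ y t)) {e}ᶜ :=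
    fun t ht => (hC2 t ht).neg
  have hC1' : ∀ y, y ≠ e → ContDiffOn ℝ 1 (fun t => -(φ y t)) (Set.Iic (0 : ℝ)) :=
    fun y hy => (hC1 y hy).neg
  have hheat' : ∀ y, y ≠ e → ∀ t ≤ (0 : ℝ),
      derivWithin (fun t => -(φ y t)) (Set.Iic (0 : ℝ)) t = lap (fun z => -(φ z t)) y := by
    intro y hy t ht
    rw [lap_neg, derivWithin.fun_neg, hheat y hy t ht]
  have hbound' : ∀ y, y ≠ e → ∀ t ≤ (0 : ℝ), |(-(φ y t))| ≤ ‖y - e‖ ^ (a + 2) := by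
    intro y hy t ht
    rw [abs_neg]
    exact hbound y hy t ht
  -- the main result away from the singular point
  have hne : ∀ y, y ≠ e → ∀ t ≤ (0:ℝ), φ y t = 0 := by
    intro y hy t ht
    have habs : ∀ η > (0:ℝ), |φ y t| ≤ η := by
      intro η hη
      have h1 := upper_bound n hn a ha1 ha2 e φ hcont hC2 hC1 hheat hbound y hy t ht η hη
      have h2 := upper_bound n hn a ha1 ha2 e (fun y t => -(φ y t)) hcont' hC2' hC1' hheat'
        hbound' y hy t ht η hη
      rw [abs_le]
      constructor <;> linarith
    by_contra hne0
    have habspos : 0 < |φ y t| := abs_pos.mpr hne0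
    have := habs (|φ y t|/2) (by linarith)
    linarith
  -- extend to the singular point by continuity
  intro y t ht
  rcases eq_or_ne y e with rfl | hy
  · -- y = e
    set v₀ : EuclideanSpace ℝ (Fin n) := EuclideanSpace.single ⟨0, by omega⟩ (1:ℝ) with hv₀
    have hv₀ne : v₀ ≠ 0 := by
      intro h
      have := congrArg norm h
      rw [hv₀, EuclideanSpace.norm_single] at this
      simp at this
    set yk : ℕ → EuclideanSpace ℝ (Fin n) := fun k => y + (1/((k:ℝ)+1)) • v₀ with hyk
    have hykne : ∀ k, yk k ≠ y := by
      intro k h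
      rw [hyk] at h
      simp only [add_eq_left] at h
      rcases smul_eq_zero.mp h with h1 | h2
      · have : ((k:ℝ)+1) ≠ 0 := by positivity
        simp at h1
        exact this (by linarith [h1])
      · exact hv₀ne h2
    have htend : Filter.Tendsto yk Filter.atTop (nhds y) := by
      have h1 : Filter.Tendsto (fun k : ℕ => (1/((k:ℝ)+1)) • v₀) Filter.atTop (nhds ((0:ℝ) • v₀)) :=
        tendsto_one_div_add_atTop_nhds_zero_nat.smul_const v₀
      rw [zero_smul] at h1
      have h2 := Filter.Tendsto.add (tendsto_const_nhds : Filter.Tendsto (fun _ : ℕ => y)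
        Filter.atTop (nhds y)) h1
      rw [add_zero] at h2
      rw [hyk]
      exact h2
    have hcw : ContinuousWithinAt (fun q : EuclideanSpace ℝ (Fin n) × ℝ => φ q.1 q.2)
        (Set.univ ×ˢ Set.Iic (0:ℝ)) (y, t) := hcont (y, t) ⟨trivial, ht⟩
    have htend2 : Filter.Tendsto (fun k => ((yk k, t) : EuclideanSpace ℝ (Fin n) × ℝ))
        Filter.atTop (nhdsWithin (y, t) (Set.univ ×ˢ Set.Iic (0:ℝ))) := by
      rw [tendsto_nhdsWithin_iff]
      constructor
      · exact htend.prodMk_nhds tendsto_const_nhds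
      · filter_upwards with k
        exact ⟨trivial, ht⟩
    have hlim : Filter.Tendsto (fun k => φ (yk k) t) Filter.atTop (nhds (φ y t)) :=
      hcw.tendsto.comp htend2
    have hzero : (fun k => φ (yk k) t) = fun _ => (0:ℝ) := by
      funext k
      exact hne (yk k) (hykne k) t ht
    rw [hzero] at hlim
    exact (tendsto_nhds_unique tendsto_const_nhds hlim).symm
  · exact hne y hy t ht
end

section
/- Let Ω ⊆ ℝⁿ be open, let v : Ω → (0,∞) be a C² function with Δv(x) + 1 = 0 for all x ∈ Ω, let m ∈ (0,1), δ > 0 and T > 0, and define ψ̄(x,τ) = (T−τ)^{(1+δ)/(1−m)} · v(x)^{1/m} for x ∈ Ω and τ ∈ (0,T). Then for all x ∈ Ω and τ ∈ (0,T): ∂ψ̄/∂τ (x,τ) − Δₓ( ψ̄(x,τ)^m ) = (T−τ)^{m(1+δ)/(1−m)} · ( 1 − ((1+δ)/(1−m)) (T−τ)^{δ} v(x)^{1/m} ). In particular, if v is bounded on Ω, then there exists τ₀ ∈ (0,T) such that ∂ψ̄/∂τ − Δₓ(ψ̄^m) > 0 on Ω × (τ₀, T), i.e. ψ̄ is a strict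 supersolution of the fast diffusion equation ∂w/∂τ = Δ(w^m) for times close to the extinction time T. -/
open Real Set

open Filter Topology in
lemma lap_congr {n : ℕ} {f g : EuclideanSpace ℝ (Fin n) → ℝ}
    {x : EuclideanSpace ℝ (Fin n)} (h : f =ᶠ[𝓝 x] g) : lap f x = lap g x := by
  unfold lap
  refine Finset.sum_congr rfl fun i _ => ?_
  have h0 : fderiv ℝ f =ᶠ[𝓝 x] fderiv ℝ g := h.fderiv
  have h1 : (fun y => fderiv ℝ f y (EuclideanSpace.single i 1))
      =ᶠ[𝓝 x] (fun y => fderiv ℝ g y (EuclideanSpace.single i 1)) :=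
    h0.mono fun y hy => by simp only [hy]
  rw [h1.fderiv_eq]

open Filter Topology in
lemma lap_const_mul {n : ℕ} {Ω : Set (EuclideanSpace ℝ (Fin n))} (hΩ : IsOpen Ω)
    {v : EuclideanSpace ℝ (Fin n) → ℝ} (hv : ContDiffOn ℝ 2 v Ω)
    {x : EuclideanSpace ℝ (Fin n)} (hx : x ∈ Ω) (c : ℝ) :
    lap (fun y => c * v y) x = c * lap v x := by
  have hmem : Ω ∈ 𝓝 x := hΩ.mem_nhds hx
  have hdiff : ∀ y ∈ Ω, DifferentiableAt ℝ v y := fun y hy =>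
    ((hv.contDiffAt (hΩ.mem_nhds hy)).differentiableAt (by norm_num))
  unfold lap
  rw [Finset.mul_sum]
  refine Finset.sum_congr rfl fun i _ => ?_
  set e := EuclideanSpace.single (𝕜 := ℝ) i (1:ℝ)
  have h1 : (fun y => fderiv ℝ (fun z => c * v z) y e)
      =ᶠ[𝓝 x] (fun y => c * fderiv ℝ v y e) := by
    filter_upwards [hmem] with y hy
    rw [fderiv_const_mul (hdiff y hy)]
    simp
  rw [h1.fderiv_eq]
  have h2 : DifferentiableAt ℝ (fun y => fderiv ℝ v y e) x := by
    have h3 : ContDiffAt ℝ 1 (fderiv ℝ v) x :=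
      (hv.contDiffAt hmem).fderiv_right (m := 1) (by norm_num)
    exact (h3.differentiableAt (by norm_num)).clm_apply (differentiableAt_const e)
  rw [fderiv_const_mul h2]
  simp

/-- with `Δv + 1 = 0`, `v > 0` on `Ω` and
`ψ̄(x,τ) = (T-τ)^{(1+δ)/(1-m)} v(x)^{1/m}`, one has
`∂ψ̄/∂τ - Δ(ψ̄^m) = (T-τ)^{m(1+δ)/(1-m)} (1 - ((1+δ)/(1-m))(T-τ)^δ v^{1/m})`;
in particular if `v` is bounded then `ψ̄` is a strict supersolution of `∂w/∂τ = Δ(w^m)`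
for times close to `T`. -/
theorem supersolution_near_extinction (n : ℕ)
    (Ω : Set (EuclideanSpace ℝ (Fin n))) (hΩ : IsOpen Ω)
    (v : EuclideanSpace ℝ (Fin n) → ℝ)
    (hv2 : ContDiffOn ℝ 2 v Ω) (hvpos : ∀ x ∈ Ω, 0 < v x)
    (hveq : ∀ x ∈ Ω, lap v x + 1 = 0)
    (m δ T : ℝ) (hm : m ∈ Set.Ioo (0 : ℝ) 1) (hδ : 0 < δ) (hT : 0 < T)
    (ψ : EuclideanSpace ℝ (Fin n) → ℝ → ℝ)
    (hψ : ∀ x τ, ψ x τ = (T - τ) ^ ((1 + δ) / (1 - m)) * v x ^ (1 / m)) :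
    (∀ x ∈ Ω, ∀ τ ∈ Set.Ioo (0 : ℝ) T,
      deriv (ψ x) τ - lap (fun y => ψ y τ ^ m) x
        = (T - τ) ^ (m * (1 + δ) / (1 - m)) *
          (1 - ((1 + δ) / (1 - m)) * (T - τ) ^ δ * v x ^ (1 / m))) ∧
    ((∃ C, ∀ x ∈ Ω, v x ≤ C) →
      ∃ τ₀ ∈ Set.Ioo (0 : ℝ) T, ∀ x ∈ Ω, ∀ τ ∈ Set.Ioo τ₀ T,
        0 < deriv (ψ x) τ - lap (fun y => ψ y τ ^ m) x) := by
  obtain ⟨hm0, hm1⟩ := hm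
  have h1m : 0 < 1 - m := by linarith
  set p : ℝ := (1 + δ) / (1 - m) with hp_def
  have hp : 0 < p := div_pos (by linarith) h1m
  have main : ∀ x ∈ Ω, ∀ τ ∈ Set.Ioo (0 : ℝ) T,
      deriv (ψ x) τ - lap (fun y => ψ y τ ^ m) x
        = (T - τ) ^ (m * (1 + δ) / (1 - m)) *
          (1 - p * (T - τ) ^ δ * v x ^ (1 / m)) := by
    intro x hx τ hτ
    have ha : (0:ℝ) < T - τ := by linarith [hτ.2]
    -- time derivative
    have hd : HasDerivAt (ψ x) (-(p * (T - τ) ^ (p - 1) * v x ^ (1 / m))) τ := by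
      have h2 : HasDerivAt (fun τ : ℝ => T - τ) (-1) τ := by
        simpa using (hasDerivAt_id τ).const_sub T
      have h3 : HasDerivAt (fun s : ℝ => s ^ p) (p * (T - τ) ^ (p - 1)) (T - τ) :=
        Real.hasDerivAt_rpow_const (Or.inl (ne_of_gt ha))
      have h4 := (h3.comp τ h2).mul_const (v x ^ (1 / m))
      have h5 : (fun s : ℝ => (T - s) ^ p * v x ^ (1 / m)) = ψ x := by
        funext s; rw [hψ]
      rw [Function.comp_def] at h4
      rw [h5] at h4
      exact h4.congr_deriv (by ring)
    -- spatial Laplacian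
    have heq : (fun y => ψ y τ ^ m)
        =ᶠ[nhds x] (fun y => (T - τ) ^ (p * m) * v y) := by
      filter_upwards [hΩ.mem_nhds hx] with y hy
      rw [hψ, Real.mul_rpow (Real.rpow_pos_of_pos ha p).le
        (Real.rpow_pos_of_pos (hvpos y hy) (1 / m)).le,
        ← Real.rpow_mul ha.le, ← Real.rpow_mul (hvpos y hy).le,
        one_div, inv_mul_cancel₀ (ne_of_gt hm0), Real.rpow_one]
    have hlapv : lap v x = -1 := by linarith [hveq x hx]
    have hlap : lap (fun y => ψ y τ ^ m) x = -((T - τ) ^ (p * m)) := by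
      rw [lap_congr heq, lap_const_mul hΩ hv2 hx, hlapv]; ring
    rw [hd.deriv, hlap]
    have e1 : m * (1 + δ) / (1 - m) = p * m := by rw [hp_def]; ring
    have e2 : p * m + δ = p - 1 := by rw [hp_def]; field_simp; ring
    have e3 : (T - τ) ^ (p - 1) = (T - τ) ^ (p * m) * (T - τ) ^ δ := by
      rw [← Real.rpow_add ha, e2]
    rw [e1, e3]; ring
  refine ⟨main, ?_⟩
  rintro ⟨C, hC⟩
  rcases Ω.eq_empty_or_nonempty with hemp | ⟨x₀, hx₀⟩
  · exact ⟨T / 2, ⟨half_pos hT, half_lt_self hT⟩,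
      fun x hx => by rw [hemp] at hx; exact absurd hx (Set.notMem_empty x)⟩
  · have hC0 : 0 < C := lt_of_lt_of_le (hvpos x₀ hx₀) (hC x₀ hx₀)
    set M : ℝ := C ^ (1 / m) with hM_def
    have hM : 0 < M := Real.rpow_pos_of_pos hC0 _
    set ε : ℝ := (1 / (2 * p * M)) ^ (1 / δ) with hε_def
    have hε : 0 < ε := Real.rpow_pos_of_pos (by positivity) _
    have hεδ : ε ^ δ = 1 / (2 * p * M) := by
      rw [hε_def, ← Real.rpow_mul (by positivity),
        one_div δ, inv_mul_cancel₀ (ne_of_gt hδ), Real.rpow_one]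
    refine ⟨max (T - ε) (T / 2), ⟨lt_of_lt_of_le (half_pos hT) (le_max_right _ _),
      max_lt (by linarith) (by linarith)⟩, ?_⟩
    intro x hx τ hτ
    have hτ0 : 0 < τ := lt_of_lt_of_le (half_pos hT)
      (le_trans (le_max_right _ _) hτ.1.le)
    have ha : (0:ℝ) < T - τ := by linarith [hτ.2]
    have haε : T - τ ≤ ε := by
      have := le_trans (le_max_left (T - ε) (T / 2)) hτ.1.le
      linarith
    rw [main x hx τ ⟨hτ0, hτ.2⟩]
    have hb1 : (T - τ) ^ δ ≤ ε ^ δ := Real.rpow_le_rpow ha.le haε hδ.le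
    have hb2 : v x ^ (1 / m) ≤ M :=
      Real.rpow_le_rpow (hvpos x hx).le (hC x hx) (by positivity)
    have hb3 : p * (T - τ) ^ δ * v x ^ (1 / m) ≤ p * ε ^ δ * M := by
      have n1 : 0 ≤ (T - τ) ^ δ := Real.rpow_nonneg ha.le δ
      have n2 : 0 ≤ v x ^ (1 / m) := Real.rpow_nonneg (hvpos x hx).le (1 / m)
      exact mul_le_mul (mul_le_mul_of_nonneg_left hb1 hp.le) hb2 n2
        (mul_nonneg hp.le (Real.rpow_nonneg hε.le δ))
    have hb4 : p * ε ^ δ * M = 1 / 2 := by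
      rw [hεδ]; field_simp
    have hpos1 : 0 < 1 - p * (T - τ) ^ δ * v x ^ (1 / m) := by
      rw [hb4] at hb3; linarith
    exact mul_pos (Real.rpow_pos_of_pos ha _) hpos1
end
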